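/- arXiv:2003.12951 — 3 statements merged into one kernel-verified Lean document; each statement's English description precedes it below -/
import Mathlib

section
/- There exist constants c > 0 and m₀ ≥ 1, depending only on μ, such that for all integers m, n with m₀ < m ≤ n and every real number k, one has |∫_{2X_n}^{∞} ⟨x⟩^μ e^{ikx} h_m(x) h_n(x) dx| ≤ e^{-c n}. -/
open Real MeasureTheory intervalIntegral

/-- Physicists' Hermite polynomials, as functions on `ℝ`. -/
noncomputable def physHermite : ℕ → ℝ → ℝ
  | 0, _ => 1
  | 1, x => 2 * x
  | n + 2, x => 2 * x * physHermite (n + 1) x - 2 * ((n : ℝ) + 1) * physHermite n x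

/-- The `j`-th Hermite function (for `j ≥ 1`), the `L²`-normalized eigenfunction of
`-d²/dx² + x²` with eigenvalue `2j - 1`. -/
noncomputable def hermiteFun (j : ℕ) (x : ℝ) : ℝ :=
  ((2 : ℝ) ^ (j - 1) * (Nat.factorial (j - 1) : ℝ) * Real.sqrt Real.pi) ^ (-(1 : ℝ) / 2) *
    Real.exp (-x ^ 2 / 2) * physHermite (j - 1) x

/-- The turning point `X_j = √(2j - 1)`. -/
noncomputable def Xpt (j : ℕ) : ℝ := Real.sqrt (2 * (j : ℝ) - 1)

/-- The oscillatory integrand `⟨x⟩^μ e^{ikx} h_m(x) h_n(x)`. -/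
noncomputable def osc (μ k : ℝ) (m n : ℕ) (x : ℝ) : ℂ :=
  (Real.sqrt (1 + x ^ 2) ^ μ : ℝ) * Complex.exp (Complex.I * k * x) *
    (hermiteFun m x : ℂ) * (hermiteFun n x : ℂ)

theorem herm_abs_le (x : ℝ) (hx : 1 ≤ x) :
    ∀ j : ℕ, 2 * (j : ℝ) ≤ x ^ 2 → |physHermite j x| ≤ (3 * x) ^ j := by
  intro j
  induction j using Nat.strong_induction_on with
  | _ j ih =>
    match j with
    | 0 => intro _; simp [physHermite]
    | 1 =>
      intro _
      rw [physHermite, abs_of_nonneg (by positivity), pow_one]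
      nlinarith
    | (j+2) =>
      intro hj
      have hj' : 2 * ((j:ℝ)+2) ≤ x ^ 2 := by push_cast at hj ⊢; linarith
      have h1 : |physHermite (j+1) x| ≤ (3*x)^(j+1) :=
        ih (j+1) (by omega) (by push_cast; nlinarith)
      have h0 : |physHermite j x| ≤ (3*x)^j :=
        ih j (by omega) (by push_cast; nlinarith)
      rw [physHermite]
      have hP : (0:ℝ) < (3*x)^j := by positivity
      calc |2 * x * physHermite (j+1) x - 2 * ((j:ℝ) + 1) * physHermite j x|
          ≤ |2 * x * physHermite (j+1) x| + |2 * ((j:ℝ) + 1) * physHermite j x| :=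
            abs_sub _ _
        _ = 2 * x * |physHermite (j+1) x| + 2 * ((j:ℝ) + 1) * |physHermite j x| := by
            rw [abs_mul (2*x), abs_mul (2*((j:ℝ)+1)), abs_of_nonneg (by positivity : (0:ℝ) ≤ 2*x),
              abs_of_nonneg (by positivity : (0:ℝ) ≤ 2*((j:ℝ)+1))]
        _ ≤ 2 * x * (3*x)^(j+1) + 2 * ((j:ℝ) + 1) * (3*x)^j := by
            gcongr
        _ ≤ (3*x)^(j+2) := by
            rw [show (3*x)^(j+2) = (3*x)^j * (9*x^2) by ring,
              show (3*x)^(j+1) = (3*x)^j * (3*x) by ring]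
            nlinarith [hP]

theorem fact_ratio (m : ℕ) (hm : 1 ≤ m) (n : ℕ) (hmn : m ≤ n) :
    Nat.factorial (n-1) ≤ Nat.factorial (m-1) * n^(n-m) := by
  induction n, hmn using Nat.le_induction with
  | base => simp
  | succ n hn ih =>
    have h1 : 1 ≤ n := le_trans hm hn
    have e : n + 1 - 1 = n := rfl
    rw [e]
    have : n.factorial = n * Nat.factorial (n-1) := (Nat.mul_factorial_pred (by omega)).symm
    rw [this]
    calc n * Nat.factorial (n-1) ≤ n * (Nat.factorial (m-1) * n^(n-m)) :=
          Nat.mul_le_mul_left n ih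
      _ = Nat.factorial (m-1) * (n * n^(n-m)) := by ring
      _ = Nat.factorial (m-1) * n^(n-m+1) := by rw [← pow_succ']
      _ ≤ Nat.factorial (m-1) * (n+1)^(n+1-m) := by
          have : n - m + 1 = n + 1 - m := by omega
          rw [this]
          exact Nat.mul_le_mul_left _ (Nat.pow_le_pow_left (by omega) _)

theorem pow_le_exp_mul_factorial : ∀ n : ℕ, (n:ℝ)^n ≤ Real.exp n * n.factorial := by
  intro n
  induction n with
  | zero => simp
  | succ n ih =>
    rcases Nat.eq_zero_or_pos n with h | h
    · subst h
      simp only [Nat.factorial, pow_one]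
      have := Real.add_one_le_exp (1:ℝ)
      push_cast
      nlinarith [Real.exp_pos (1:ℝ)]
    · have hn : (0:ℝ) < n := by exact_mod_cast h
      rw [show ((n+1:ℕ):ℝ) = (n:ℝ)+1 by push_cast; ring]
      have key : ((n:ℝ)+1) ≤ n * Real.exp ((n:ℝ)⁻¹) := by
        have := Real.add_one_le_exp ((n:ℝ)⁻¹)
        calc (n:ℝ)+1 = n * ((n:ℝ)⁻¹ + 1) := by field_simp; ring
          _ ≤ n * Real.exp ((n:ℝ)⁻¹) := by nlinarith
      have key2 : ((n:ℝ)+1)^n ≤ (n:ℝ)^n * Real.exp 1 := by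
        calc ((n:ℝ)+1)^n ≤ (n * Real.exp ((n:ℝ)⁻¹))^n := by
              apply pow_le_pow_left₀ (by positivity) key
          _ = (n:ℝ)^n * (Real.exp ((n:ℝ)⁻¹))^n := mul_pow _ _ _
          _ = (n:ℝ)^n * Real.exp 1 := by
              rw [← Real.exp_nat_mul]
              congr 1
              field_simp
      have hfact : ((n+1).factorial : ℝ) = ((n:ℝ)+1) * n.factorial := by
        rw [Nat.factorial_succ]; push_cast; ring
      calc ((n:ℝ)+1)^(n+1) = ((n:ℝ)+1)^n * ((n:ℝ)+1) := pow_succ _ _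
        _ ≤ (n:ℝ)^n * Real.exp 1 * ((n:ℝ)+1) := by
            apply mul_le_mul_of_nonneg_right key2 (by positivity)
        _ ≤ Real.exp n * n.factorial * Real.exp 1 * ((n:ℝ)+1) := by
            gcongr
        _ = Real.exp ((n:ℝ)+1) * ((n+1).factorial) := by
            rw [hfact, Real.exp_add]
            ring

theorem pow2_big (n : ℕ) (hn : 21 ≤ n) : (81:ℝ) * n ≤ 2^n := by
  induction n, hn using Nat.le_induction with
  | base => norm_num
  | succ n hn ih =>
    have : (81:ℝ) ≤ 81 * n := by
      have : (21:ℝ) ≤ n := by exact_mod_cast hn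
      nlinarith
    push_cast
    rw [pow_succ]
    push_cast at ih
    nlinarith

theorem exp5_ge : (144:ℝ) ≤ Real.exp 5 := by
  have h : (2.7182818283:ℝ)^5 ≤ (Real.exp 1)^5 :=
    pow_le_pow_left₀ (by norm_num) Real.exp_one_gt_d9.le 5
  have e : Real.exp 5 = (Real.exp 1)^5 := by rw [← Real.exp_nat_mul]; norm_num
  rw [e]
  refine le_trans ?_ h
  norm_num

theorem exp4_le : Real.exp 4 ≤ 81 := by
  have h : (Real.exp 1)^4 ≤ (2.7182818286:ℝ)^4 :=
    pow_le_pow_left₀ (Real.exp_pos 1).le Real.exp_one_lt_d9.le 4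
  have e : Real.exp 4 = (Real.exp 1)^4 := by rw [← Real.exp_nat_mul]; norm_num
  rw [e]
  refine le_trans h ?_
  norm_num

/-- bound for a single Hermite function, promoted to top index `n`. -/
theorem hermiteFun_le (n j : ℕ) (x : ℝ) (hj : 1 ≤ j) (hjn : j ≤ n) (hx : 1 ≤ x)
    (h2n : 2*(n:ℝ) ≤ x^2) :
    |hermiteFun j x| ≤
      (3*x)^(n-1) / Real.sqrt ((n-1).factorial) * Real.exp (-x^2/2) := by
  have hx0 : 0 < x := by linarith
  have hfj1 : (1:ℝ) ≤ ((j-1).factorial : ℝ) := by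
    exact_mod_cast Nat.one_le_iff_ne_zero.mpr (Nat.factorial_ne_zero _)
  have hF1 : (1:ℝ) ≤ ((n-1).factorial : ℝ) := by
    exact_mod_cast Nat.one_le_iff_ne_zero.mpr (Nat.factorial_ne_zero _)
  set fj : ℝ := ((j-1).factorial : ℝ) with hfj
  set F : ℝ := ((n-1).factorial : ℝ) with hF
  have hpi : (1:ℝ) ≤ Real.sqrt Real.pi := by
    rw [show (1:ℝ) = Real.sqrt 1 by simp]
    exact Real.sqrt_le_sqrt (by nlinarith [Real.pi_gt_three])
  have h2pow : (1:ℝ) ≤ (2:ℝ)^(j-1) := one_le_pow₀ (by norm_num)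
  -- step 1: raw bound
  have hH : |physHermite (j-1) x| ≤ (3*x)^(j-1) := by
    apply herm_abs_le x hx
    have : ((j-1:ℕ):ℝ) ≤ (n:ℝ) := by exact_mod_cast Nat.le_trans (Nat.sub_le j 1) hjn
    linarith
  have hNle : ((2:ℝ)^(j-1) * fj * Real.sqrt Real.pi) ^ (-(1:ℝ)/2) ≤ fj ^ (-(1:ℝ)/2) := by
    have t1 : fj ≤ 2^(j-1) * fj := le_mul_of_one_le_left (by linarith) h2pow
    have t2 : 2^(j-1) * fj ≤ 2^(j-1) * fj * Real.sqrt Real.pi :=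
      le_mul_of_one_le_right (by nlinarith) hpi
    exact Real.rpow_le_rpow_of_nonpos (by linarith) (le_trans t1 t2) (by norm_num)
  have hNval : fj ^ (-(1:ℝ)/2) = (Real.sqrt fj)⁻¹ := by
    rw [show (-(1:ℝ)/2) = -(1/2) by norm_num, Real.rpow_neg (by linarith), ← Real.sqrt_eq_rpow]
  have habs : |hermiteFun j x| = ((2:ℝ)^(j-1) * fj * Real.sqrt Real.pi) ^ (-(1:ℝ)/2) *
      Real.exp (-x^2/2) * |physHermite (j-1) x| := by
    rw [hermiteFun, abs_mul, abs_mul, abs_of_nonneg (Real.rpow_nonneg (by positivity) _),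
      abs_of_nonneg (Real.exp_pos _).le]
  have step1 : |hermiteFun j x| ≤ (3*x)^(j-1) / Real.sqrt fj * Real.exp (-x^2/2) := by
    rw [habs]
    calc ((2:ℝ)^(j-1) * fj * Real.sqrt Real.pi) ^ (-(1:ℝ)/2) * Real.exp (-x^2/2) *
          |physHermite (j-1) x|
        ≤ fj ^ (-(1:ℝ)/2) * Real.exp (-x^2/2) * (3*x)^(j-1) := by
          gcongr
      _ = (3*x)^(j-1) / Real.sqrt fj * Real.exp (-x^2/2) := by
          rw [hNval]; ring
  -- step 2: promote index
  have hsfj : 0 < Real.sqrt fj := Real.sqrt_pos.mpr (by linarith)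
  have hsF : 0 < Real.sqrt F := Real.sqrt_pos.mpr (by linarith)
  have hkey : Real.sqrt F ≤ Real.sqrt fj * (3*x)^(n-j) := by
    have hFle : F ≤ (Real.sqrt fj * (3*x)^(n-j))^2 := by
      rw [mul_pow, Real.sq_sqrt (by linarith : (0:ℝ) ≤ fj)]
      have c1 : F ≤ fj * ((n:ℝ))^(n-j) := by
        rw [hF, hfj]
        exact_mod_cast fact_ratio j hj n hjn
      have c2 : ((n:ℝ))^(n-j) ≤ ((3*x)^2)^(n-j) := by
        apply pow_le_pow_left₀ (by positivity)
        nlinarith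
      have c3 : ((3*x)^2)^(n-j) = ((3*x)^(n-j))^2 := by
        rw [← pow_mul, ← pow_mul, Nat.mul_comm]
      nlinarith [pow_nonneg (show (0:ℝ) ≤ (n:ℝ) by positivity) (n-j)]
    calc Real.sqrt F ≤ Real.sqrt ((Real.sqrt fj * (3*x)^(n-j))^2) := Real.sqrt_le_sqrt hFle
      _ = Real.sqrt fj * (3*x)^(n-j) := Real.sqrt_sq (by positivity)
  have step2 : (3*x)^(j-1) / Real.sqrt fj ≤ (3*x)^(n-1) / Real.sqrt F := by
    rw [div_le_div_iff₀ hsfj hsF]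
    calc (3*x)^(j-1) * Real.sqrt F ≤ (3*x)^(j-1) * (Real.sqrt fj * (3*x)^(n-j)) := by
          gcongr
      _ = ((3*x)^(j-1) * (3*x)^(n-j)) * Real.sqrt fj := by ring
      _ = (3*x)^(n-1) * Real.sqrt fj := by
          rw [← pow_add]
          congr 2
          omega
  calc |hermiteFun j x| ≤ (3*x)^(j-1) / Real.sqrt fj * Real.exp (-x^2/2) := step1
    _ ≤ (3*x)^(n-1) / Real.sqrt F * Real.exp (-x^2/2) := by
        apply mul_le_mul_of_nonneg_right step2 (Real.exp_pos _).le

theorem tail_mono (n : ℕ) (hn : 1 ≤ n) (a x : ℝ) (ha : 4*(n:ℝ) ≤ a) (hax : a ≤ x^2)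
    (hx8 : 8 ≤ x) :
    x^(2*n) * Real.exp (-x^2) ≤ a^n * Real.exp (-(7/8)*a) * Real.exp (-x) := by
  have hn1 : (1:ℝ) ≤ (n:ℝ) := by exact_mod_cast hn
  have ha0 : (0:ℝ) < a := by linarith
  have hx0 : (0:ℝ) < x := by linarith
  set s : ℝ := x^2 - a with hs
  have hs0 : 0 ≤ s := by simp [hs]; linarith
  have key2 : x^2 ≤ a * Real.exp (s/a) := by
    have h := Real.add_one_le_exp (s/a)
    have : a * (s/a + 1) = x^2 := by field_simp; rw [hs]; ring
    nlinarith
  have key3 : (x^2)^n ≤ a^n * Real.exp ((n:ℝ)*(s/a)) := by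
    calc (x^2)^n ≤ (a * Real.exp (s/a))^n :=
          pow_le_pow_left₀ (by positivity) key2 n
      _ = a^n * (Real.exp (s/a))^n := mul_pow _ _ _
      _ = a^n * Real.exp ((n:ℝ)*(s/a)) := by rw [← Real.exp_nat_mul]
  have hnt : (n:ℝ)*(s/a) ≤ s/4 := by
    rw [show (n:ℝ)*(s/a) = ((n:ℝ)*s)/a by ring, div_le_div_iff₀ ha0 (by norm_num)]
    nlinarith
  have key4 : (x^2)^n ≤ a^n * Real.exp (s/4) := by
    calc (x^2)^n ≤ a^n * Real.exp ((n:ℝ)*(s/a)) := key3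
      _ ≤ a^n * Real.exp (s/4) := by gcongr
  have expstep : Real.exp (s/4) * Real.exp (-x^2) ≤ Real.exp (-(7/8)*a) * Real.exp (-x) := by
    rw [← Real.exp_add, ← Real.exp_add]
    apply Real.exp_le_exp.mpr
    have hxx : 8*x ≤ x^2 := by nlinarith
    simp only [hs]
    nlinarith
  calc x^(2*n) * Real.exp (-x^2) = (x^2)^n * Real.exp (-x^2) := by rw [pow_mul]
    _ ≤ (a^n * Real.exp (s/4)) * Real.exp (-x^2) := by
        apply mul_le_mul_of_nonneg_right key4 (Real.exp_pos _).le
    _ = a^n * (Real.exp (s/4) * Real.exp (-x^2)) := by ring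
    _ ≤ a^n * (Real.exp (-(7/8)*a) * Real.exp (-x)) := by
        apply mul_le_mul_of_nonneg_left expstep (by positivity)
    _ = a^n * Real.exp (-(7/8)*a) * Real.exp (-x) := by ring

theorem Mbound (n : ℕ) (hn : 21 ≤ n) :
    (9:ℝ)^n / ((n-1).factorial : ℝ) * ((4*(2*(n:ℝ)-1))^n * Real.exp (-(7/8)*(4*(2*(n:ℝ)-1))))
      ≤ Real.exp (-(n:ℝ)) := by
  set t : ℝ := (n:ℝ) with ht
  have ht21 : (21:ℝ) ≤ t := by rw [ht]; exact_mod_cast hn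
  set a : ℝ := 4*(2*t-1) with haa
  have hF1 : (1:ℝ) ≤ ((n-1).factorial : ℝ) := by
    exact_mod_cast Nat.one_le_iff_ne_zero.mpr (Nat.factorial_ne_zero _)
  set F : ℝ := ((n-1).factorial : ℝ) with hF
  have hF0 : (0:ℝ) < F := by linarith
  have hfact : (n.factorial : ℝ) = t * F := by
    rw [ht, hF]
    exact_mod_cast (Nat.mul_factorial_pred (by omega)).symm
  have k1 : t^n ≤ Real.exp t * (t * F) := by
    rw [← hfact]; exact pow_le_exp_mul_factorial n
  have htn : (0:ℝ) < t^n := by positivity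
  -- key scalar inequality
  have key : (72:ℝ)^n * Real.exp (7/2) * t ≤ Real.exp (5*t) := by
    have e5 : Real.exp (5*t) = (Real.exp 5)^n := by
      rw [← Real.exp_nat_mul]; congr 1; rw [ht]; ring
    have c144 : (144:ℝ)^n ≤ (Real.exp 5)^n :=
      pow_le_pow_left₀ (by norm_num) exp5_ge n
    have c72 : (144:ℝ)^n = 2^n * 72^n := by
      rw [← mul_pow]; norm_num
    have c81 : Real.exp (7/2) ≤ 81 := by
      have : Real.exp (7/2) ≤ Real.exp 4 := Real.exp_le_exp.mpr (by norm_num)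
      linarith [exp4_le]
    have cbig := pow2_big n hn
    calc (72:ℝ)^n * Real.exp (7/2) * t ≤ (72:ℝ)^n * 81 * t := by
          gcongr
      _ = (81*t) * 72^n := by ring
      _ ≤ 2^n * 72^n := by
          apply mul_le_mul_of_nonneg_right cbig (by positivity)
      _ = 144^n := c72.symm
      _ ≤ (Real.exp 5)^n := c144
      _ = Real.exp (5*t) := e5.symm
  -- assemble
  rw [div_mul_eq_mul_div, div_le_iff₀ hF0]
  have hFlb : t^n / (Real.exp t * t) ≤ F := by
    rw [div_le_iff₀ (by positivity)]
    nlinarith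
  have lhs_le : (9:ℝ)^n * (a^n * Real.exp (-(7/8)*a)) * (Real.exp t * t)
      ≤ Real.exp (-t) * t^n := by
    have ha8 : a ≤ 8*t := by rw [haa]; linarith
    have ha0 : (0:ℝ) ≤ a := by rw [haa]; linarith
    have hexpa : Real.exp (-(7/8)*a) = Real.exp (7/2) * Real.exp (-7*t) := by
      rw [← Real.exp_add]; congr 1; rw [haa]; ring
    calc (9:ℝ)^n * (a^n * Real.exp (-(7/8)*a)) * (Real.exp t * t)
        ≤ (9:ℝ)^n * ((8*t)^n * Real.exp (-(7/8)*a)) * (Real.exp t * t) := by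
          gcongr
      _ = (72:ℝ)^n * t^n * Real.exp (7/2) * (Real.exp (-7*t) * Real.exp t) * t := by
          rw [hexpa, mul_pow 8 t, show (72:ℝ)^n = 9^n * 8^n by rw [← mul_pow]; norm_num]
          ring
      _ = ((72:ℝ)^n * Real.exp (7/2) * t) * Real.exp (-6*t) * t^n := by
          rw [← Real.exp_add, show -7*t + t = -6*t by ring]
          ring
      _ ≤ Real.exp (5*t) * Real.exp (-6*t) * t^n := by
          apply mul_le_mul_of_nonneg_right
            (mul_le_mul_of_nonneg_right key (Real.exp_pos _).le) htn.le
      _ = Real.exp (-t) * t^n := by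
          rw [← Real.exp_add, show 5*t + -6*t = -t by ring]
  -- combine: 9^n * (a^n * E) ≤ exp(-t) * F
  have hpos : (0:ℝ) < Real.exp t * t := by positivity
  have final : (9:ℝ)^n * (a^n * Real.exp (-(7/8)*a)) ≤ Real.exp (-t) * (t^n / (Real.exp t * t)) := by
    rw [← mul_div_assoc, le_div_iff₀ hpos]
    exact lhs_le
  calc (9:ℝ)^n * (a^n * Real.exp (-(7/8)*a)) ≤ Real.exp (-t) * (t^n / (Real.exp t * t)) := final
    _ ≤ Real.exp (-t) * F := by
        apply mul_le_mul_of_nonneg_left hFlb (Real.exp_pos _).le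

theorem osc_ptwise (μ k : ℝ) (hμ0 : 0 ≤ μ) (hμ1 : μ ≤ 1) (m n : ℕ) (hm : 21 ≤ m)
    (hmn : m ≤ n) (x : ℝ) (hx : 2 * Xpt n ≤ x) :
    ‖osc μ k m n x‖ ≤
      ((9:ℝ)^n / ((n-1).factorial : ℝ) *
        ((4*(2*(n:ℝ)-1))^n * Real.exp (-(7/8)*(4*(2*(n:ℝ)-1))))) * Real.exp (-x) := by
  have hn21 : 21 ≤ n := le_trans hm hmn
  have hn1 : (21:ℝ) ≤ (n:ℝ) := by exact_mod_cast hn21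
  set a : ℝ := 4*(2*(n:ℝ)-1) with haa
  have hXpt : (2 * Xpt n)^2 = a := by
    rw [Xpt, mul_pow, Real.sq_sqrt (by linarith)]
    ring
  have hXpt0 : 0 ≤ 2 * Xpt n := by unfold Xpt; positivity
  have hax : a ≤ x^2 := by
    rw [← hXpt]
    exact pow_le_pow_left₀ hXpt0 hx 2
  have ha164 : (164:ℝ) ≤ a := by rw [haa]; linarith
  have hx0 : (0:ℝ) ≤ x := le_trans hXpt0 hx
  have hx8 : (8:ℝ) ≤ x := by nlinarith
  have hx1 : (1:ℝ) ≤ x := by linarith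
  have h2n : 2*(n:ℝ) ≤ x^2 := by rw [haa] at hax; linarith
  -- norm of osc
  have hexp1 : ‖Complex.exp (Complex.I * k * x)‖ = 1 := by
    rw [Complex.norm_exp]
    simp [Complex.mul_re]
  have hnorm : ‖osc μ k m n x‖ =
      (Real.sqrt (1 + x^2))^μ * |hermiteFun m x| * |hermiteFun n x| := by
    simp only [osc, norm_mul, Complex.norm_real, Real.norm_eq_abs, hexp1]
    rw [abs_of_nonneg (Real.rpow_nonneg (Real.sqrt_nonneg _) _)]
    ring
  -- weight bound
  have hwt : (Real.sqrt (1 + x^2))^μ ≤ 2*x := by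
    have h1 : (1:ℝ) ≤ Real.sqrt (1 + x^2) := by
      have hs := Real.sq_sqrt (show (0:ℝ) ≤ 1 + x^2 by positivity)
      have hnn := Real.sqrt_nonneg (1 + x^2)
      nlinarith
    calc (Real.sqrt (1 + x^2))^μ ≤ (Real.sqrt (1 + x^2))^(1:ℝ) :=
          Real.rpow_le_rpow_of_exponent_le h1 hμ1
      _ = Real.sqrt (1 + x^2) := Real.rpow_one _
      _ ≤ 2*x := by
          rw [show 2*x = Real.sqrt ((2*x)^2) from (Real.sqrt_sq (by positivity)).symm]
          exact Real.sqrt_le_sqrt (by nlinarith)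
  set F : ℝ := ((n-1).factorial : ℝ) with hF
  have hF1 : (1:ℝ) ≤ F := by
    rw [hF]; exact_mod_cast Nat.one_le_iff_ne_zero.mpr (Nat.factorial_ne_zero _)
  have hsF : 0 < Real.sqrt F := Real.sqrt_pos.mpr (by linarith)
  have hbm := hermiteFun_le n m x (by omega) hmn hx1 h2n
  have hbn := hermiteFun_le n n x (by omega) le_rfl hx1 h2n
  -- product bound
  have hmain : ‖osc μ k m n x‖ ≤ (2*x) * (((3*x)^(n-1) / Real.sqrt F * Real.exp (-x^2/2))^2) := by
    rw [hnorm, pow_two ((3*x)^(n-1) / Real.sqrt F * Real.exp (-x^2/2)), ← mul_assoc]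
    apply mul_le_mul (by apply mul_le_mul hwt hbm (abs_nonneg _) (by linarith)) hbn
      (abs_nonneg _) (by positivity)
  have hsq : ((3*x)^(n-1) / Real.sqrt F * Real.exp (-x^2/2))^2 =
      ((3*x)^(n-1))^2 / F * Real.exp (-x^2) := by
    rw [mul_pow, div_pow, Real.sq_sqrt (by linarith : (0:ℝ) ≤ F),
      pow_two (Real.exp (-x^2/2)), ← Real.exp_add]
    congr 2
    ring
  -- algebraic cleanup to 9^n * x^(2n)
  have halg : (2*x) * (((3*x)^(n-1))^2 / F * Real.exp (-x^2)) ≤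
      (9:ℝ)^n / F * (x^(2*n) * Real.exp (-x^2)) := by
    have hc : (2*x) * ((3*x)^(n-1))^2 ≤ (9:ℝ)^n * x^(2*n) := by
      have e1 : ((3*x)^(n-1))^2 = 9^(n-1) * (x^2)^(n-1) := by
        rw [← pow_mul, ← pow_mul, Nat.mul_comm (n-1) 2, pow_mul, pow_mul]
        rw [show (3*x)^2 = 9 * x^2 by ring, mul_pow]
      have e2 : (9:ℝ)^n = 9^(n-1) * 9 := by
        rw [← pow_succ]
        congr 1
        omega
      have e3 : x^(2*n) = (x^2)^(n-1) * x^2 := by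
        rw [pow_mul, ← pow_succ]
        congr 1
        omega
      rw [e1, e2, e3]
      have key : 2*x ≤ 9*x^2 := by nlinarith
      calc 2*x * ((9:ℝ)^(n-1) * (x^2)^(n-1)) = ((9:ℝ)^(n-1) * (x^2)^(n-1)) * (2*x) := by ring
        _ ≤ ((9:ℝ)^(n-1) * (x^2)^(n-1)) * (9*x^2) :=
            mul_le_mul_of_nonneg_left key (by positivity)
        _ = (9:ℝ)^(n-1) * 9 * ((x^2)^(n-1) * x^2) := by ring
    calc (2*x) * (((3*x)^(n-1))^2 / F * Real.exp (-x^2))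
        = ((2*x) * ((3*x)^(n-1))^2) * (Real.exp (-x^2) / F) := by ring
      _ ≤ ((9:ℝ)^n * x^(2*n)) * (Real.exp (-x^2) / F) := by
          apply mul_le_mul_of_nonneg_right hc (by positivity)
      _ = (9:ℝ)^n / F * (x^(2*n) * Real.exp (-x^2)) := by ring
  -- monotone tail bound
  have htail : x^(2*n) * Real.exp (-x^2) ≤ a^n * Real.exp (-(7/8)*a) * Real.exp (-x) :=
    tail_mono n (by omega) a x (by rw [haa]; linarith) hax hx8
  calc ‖osc μ k m n x‖ ≤ (2*x) * (((3*x)^(n-1) / Real.sqrt F * Real.exp (-x^2/2))^2) := hmain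
    _ = (2*x) * (((3*x)^(n-1))^2 / F * Real.exp (-x^2)) := by rw [hsq]
    _ ≤ (9:ℝ)^n / F * (x^(2*n) * Real.exp (-x^2)) := halg
    _ ≤ (9:ℝ)^n / F * (a^n * Real.exp (-(7/8)*a) * Real.exp (-x)) := by
        apply mul_le_mul_of_nonneg_left htail (by positivity)
    _ = ((9:ℝ)^n / F * (a^n * Real.exp (-(7/8)*a))) * Real.exp (-x) := by ring

/-- exponential smallness of the oscillatory integral on `[2X_n, ∞)`. -/
theorem hermite_oscillatory_Ioi_two_Xn (μ : ℝ) (hμ0 : 0 ≤ μ) (hμ1 : μ < 1 / 3) :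
    ∃ c : ℝ, 0 < c ∧ ∃ m₀ : ℕ, 1 ≤ m₀ ∧ ∀ m n : ℕ, m₀ < m → m ≤ n → ∀ k : ℝ,
      ‖∫ x in Set.Ioi (2 * Xpt n), osc μ k m n x‖ ≤ Real.exp (-(c * n)) := by
  refine ⟨1, one_pos, 20, by norm_num, ?_⟩
  intro m n hm hmn k
  have hm21 : 21 ≤ m := hm
  have hn21 : 21 ≤ n := le_trans hm21 hmn
  have hn1 : (21:ℝ) ≤ (n:ℝ) := by exact_mod_cast hn21
  have hμ1' : μ ≤ 1 := by linarith
  set x₀ : ℝ := 2 * Xpt n with hx₀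
  have hx₀0 : 0 ≤ x₀ := by rw [hx₀]; unfold Xpt; positivity
  set M : ℝ := (9:ℝ)^n / ((n-1).factorial : ℝ) *
      ((4*(2*(n:ℝ)-1))^n * Real.exp (-(7/8)*(4*(2*(n:ℝ)-1)))) with hM
  have ha0 : (0:ℝ) ≤ 4*(2*(n:ℝ)-1) := by linarith
  have hF0 : (0:ℝ) < ((n-1).factorial : ℝ) := by exact_mod_cast Nat.factorial_pos _
  have hM0 : 0 ≤ M := by
    rw [hM]
    apply mul_nonneg (by positivity)
    exact mul_nonneg (pow_nonneg ha0 n) (Real.exp_pos _).le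
  have hGint : IntegrableOn (fun x : ℝ => M * Real.exp (-x)) (Set.Ioi x₀) := by
    have h1 : IntegrableOn (fun x : ℝ => Real.exp (-x)) (Set.Ioi x₀) := by
      simpa using exp_neg_integrableOn_Ioi x₀ one_pos
    exact h1.const_mul M
  have hae : ∀ᵐ x ∂(volume.restrict (Set.Ioi x₀)),
      ‖osc μ k m n x‖ ≤ M * Real.exp (-x) := by
    filter_upwards [ae_restrict_mem measurableSet_Ioi] with x hx
    exact osc_ptwise μ k hμ0 hμ1' m n hm21 hmn x (le_of_lt hx)
  have key : ‖∫ x in Set.Ioi x₀, osc μ k m n x‖ ≤ M * Real.exp (-x₀) := by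
    calc ‖∫ x in Set.Ioi x₀, osc μ k m n x‖
        ≤ ∫ x in Set.Ioi x₀, ‖osc μ k m n x‖ := norm_integral_le_integral_norm _
      _ ≤ ∫ x in Set.Ioi x₀, M * Real.exp (-x) :=
          integral_mono_of_nonneg (Filter.Eventually.of_forall fun x => norm_nonneg _) hGint hae
      _ = M * ∫ x in Set.Ioi x₀, Real.exp (-x) := integral_const_mul M _
      _ = M * Real.exp (-x₀) := by rw [integral_exp_neg_Ioi]
  have hfin : M * Real.exp (-x₀) ≤ Real.exp (-(n:ℝ)) := by
    calc M * Real.exp (-x₀) ≤ M * 1 := by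
          apply mul_le_mul_of_nonneg_left _ hM0
          exact Real.exp_le_one_iff.mpr (by linarith)
      _ = M := mul_one M
      _ ≤ Real.exp (-(n:ℝ)) := Mbound n hn21
  rw [one_mul]
  exact le_trans key hfin
end

section
/- There exist constants C > 0 and m₀ ≥ 1, depending only on μ, such that for all integers m, n with m₀ < m ≤ n and X_n ≥ 2X_m, and every real number k ≠ 0, one has |∫_{0}^{X_m - X_m^{-1/3}} ⟨x⟩^μ e^{ikx} h_m(x) h_n(x) dx| ≤ C · (max(|k|, 1))^{1/2} · m^{-(1/8 - μ/4)} · n^{-(1/8 - μ/4)}. -/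
open Real MeasureTheory intervalIntegral

lemma physHermite_zero (x : ℝ) : physHermite 0 x = 1 := rfl
lemma physHermite_one (x : ℝ) : physHermite 1 x = 2 * x := rfl
lemma physHermite_add_two (n : ℕ) (x : ℝ) :
    physHermite (n + 2) x = 2 * x * physHermite (n + 1) x - 2 * ((n : ℝ) + 1) * physHermite n x := rfl

lemma physHermite_succ (p : ℕ) (x : ℝ) :
    physHermite (p + 1) x = 2 * x * physHermite p x - 2 * (p : ℝ) * physHermite (p - 1) x := by
  cases p with
  | zero => simp [physHermite_zero, physHermite_one]
  | succ q => rw [physHermite_add_two]; push_cast; ring_nf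

lemma physHermite_hasDerivAt : ∀ (p : ℕ) (x : ℝ),
    HasDerivAt (fun y => physHermite p y) (2 * (p : ℝ) * physHermite (p - 1) x) x
  | 0, x => by simpa [physHermite_zero] using (hasDerivAt_const x (1:ℝ))
  | 1, x => by
      have h : HasDerivAt (fun y : ℝ => 2 * y) 2 x := by
        simpa using (hasDerivAt_id x).const_mul (2:ℝ)
      simpa [physHermite_one, physHermite_zero] using h
  | (q + 2), x => by
      have h1 := physHermite_hasDerivAt (q + 1) x
      have h0 := physHermite_hasDerivAt q x
      have hA : HasDerivAt (fun y : ℝ => 2 * y * physHermite (q + 1) y)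
          (2 * physHermite (q + 1) x + 2 * x * (2 * ((q:ℝ) + 1) * physHermite q x)) x := by
        have := (((hasDerivAt_id x).const_mul (2:ℝ)).mul h1)
        simp only [id_eq] at this
        refine this.congr_deriv ?_
        push_cast [Nat.add_sub_cancel]
        ring
      have hB : HasDerivAt (fun y : ℝ => 2 * ((q : ℝ) + 1) * physHermite q y)
          (2 * ((q:ℝ) + 1) * (2 * (q:ℝ) * physHermite (q - 1) x)) x := h0.const_mul _
      have hAB := hA.sub hB
      have hfun : (fun y => physHermite (q + 2) y) =
          fun y : ℝ => 2 * y * physHermite (q + 1) y - 2 * ((q : ℝ) + 1) * physHermite q y := by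
        funext y; rw [physHermite_add_two]
      rw [hfun]
      refine hAB.congr_deriv ?_
      have hrec := physHermite_succ q x
      push_cast [Nat.add_sub_cancel]
      rw [physHermite_succ q x]
      ring

lemma physHermite_rec' (p : ℕ) (hp : 1 ≤ p) (x : ℝ) :
    physHermite p x = 2 * x * physHermite (p - 1) x - 2 * ((p : ℝ) - 1) * physHermite (p - 2) x := by
  obtain ⟨q, rfl⟩ := Nat.exists_eq_add_of_le hp
  have := physHermite_succ q x
  simp only [Nat.add_sub_cancel_left]
  rw [show 1 + q = q + 1 by ring, show q + 1 - 2 = q - 1 from rfl]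
  push_cast
  rw [physHermite_succ q x]
  ring

/-- key identity used for the second derivative -/
lemma physHermite_key (p : ℕ) (x : ℝ) :
    2 * (p : ℝ) * physHermite p x
      = 4 * (p : ℝ) * x * physHermite (p - 1) x
        - 4 * (p : ℝ) * ((p - 1 : ℕ) : ℝ) * physHermite (p - 2) x := by
  rcases Nat.eq_zero_or_pos p with h | h
  · subst h; push_cast; ring
  · rw [physHermite_rec' p h x]
    have : ((p - 1 : ℕ) : ℝ) = (p : ℝ) - 1 := by
      push_cast [Nat.cast_sub h]; ring
    rw [this]; ring

noncomputable def HF (p : ℕ) (x : ℝ) : ℝ :=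
  ((2 : ℝ) ^ p * (Nat.factorial p : ℝ) * Real.sqrt Real.pi) ^ (-(1 : ℝ) / 2) *
    Real.exp (-x ^ 2 / 2) * physHermite p x

noncomputable def HFd (p : ℕ) (x : ℝ) : ℝ :=
  ((2 : ℝ) ^ p * (Nat.factorial p : ℝ) * Real.sqrt Real.pi) ^ (-(1 : ℝ) / 2) *
    Real.exp (-x ^ 2 / 2) *
    (2 * (p : ℝ) * physHermite (p - 1) x - x * physHermite p x)

lemma expHalf_hasDerivAt (x : ℝ) :
    HasDerivAt (fun y : ℝ => Real.exp (-y ^ 2 / 2)) (-x * Real.exp (-x ^ 2 / 2)) x := by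
  have h1 : HasDerivAt (fun y : ℝ => -y ^ 2 / 2) (-x) x := by
    have := ((hasDerivAt_pow 2 x).neg).div_const 2
    refine this.congr_deriv ?_; push_cast; ring
  simpa [mul_comm] using h1.exp

lemma HF_hasDerivAt (p : ℕ) (x : ℝ) : HasDerivAt (HF p) (HFd p x) x := by
  set N : ℝ := ((2 : ℝ) ^ p * (Nat.factorial p : ℝ) * Real.sqrt Real.pi) ^ (-(1 : ℝ) / 2) with hN
  have h1 : HasDerivAt (fun y : ℝ => N * Real.exp (-y ^ 2 / 2))
      (N * (-x * Real.exp (-x ^ 2 / 2))) x := (expHalf_hasDerivAt x).const_mul N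
  have h2 := h1.mul (physHermite_hasDerivAt p x)
  have hfun : HF p = fun y => (N * Real.exp (-y ^ 2 / 2)) * physHermite p y := rfl
  rw [hfun]
  refine h2.congr_deriv ?_
  simp only [HFd, ← hN]
  ring

lemma HFd_hasDerivAt (p : ℕ) (x : ℝ) :
    HasDerivAt (HFd p) ((x ^ 2 - (2 * (p : ℝ) + 1)) * HF p x) x := by
  set N : ℝ := ((2 : ℝ) ^ p * (Nat.factorial p : ℝ) * Real.sqrt Real.pi) ^ (-(1 : ℝ) / 2) with hN
  have h1 : HasDerivAt (fun y : ℝ => N * Real.exp (-y ^ 2 / 2))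
      (N * (-x * Real.exp (-x ^ 2 / 2))) x := (expHalf_hasDerivAt x).const_mul N
  have hin : HasDerivAt (fun y : ℝ => 2 * (p : ℝ) * physHermite (p - 1) y - y * physHermite p y)
      (2 * (p : ℝ) * (2 * ((p - 1 : ℕ) : ℝ) * physHermite (p - 1 - 1) x)
        - (physHermite p x + x * (2 * (p : ℝ) * physHermite (p - 1) x))) x := by
    have := ((physHermite_hasDerivAt (p - 1) x).const_mul (2 * (p : ℝ))).sub
      ((hasDerivAt_id x).mul (physHermite_hasDerivAt p x))
    simp only [id_eq] at this
    refine this.congr_deriv ?_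
    ring
  have h2 := h1.mul hin
  have hfun : HFd p = fun y => (N * Real.exp (-y ^ 2 / 2)) *
      (2 * (p : ℝ) * physHermite (p - 1) y - y * physHermite p y) := rfl
  rw [hfun]
  refine h2.congr_deriv ?_
  have hkey := physHermite_key p x
  have hHF : HF p x = N * Real.exp (-x ^ 2 / 2) * physHermite p x := rfl
  rw [hHF]
  rw [show p - 1 - 1 = p - 2 from rfl]
  linear_combination (N * Real.exp (-x ^ 2 / 2)) * hkey

lemma HF_continuous (p : ℕ) : Continuous (HF p) :=
  continuous_iff_continuousAt.2 fun x => (HF_hasDerivAt p x).continuousAt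

lemma HFd_continuous (p : ℕ) : Continuous (HFd p) :=
  continuous_iff_continuousAt.2 fun x => (HFd_hasDerivAt p x).continuousAt

noncomputable def En (p : ℕ) (x : ℝ) : ℝ :=
  HFd p x ^ 2 + (2 * (p : ℝ) + 1 - x ^ 2) * HF p x ^ 2

lemma En_hasDerivAt (p : ℕ) (x : ℝ) :
    HasDerivAt (En p) (-2 * x * HF p x ^ 2) x := by
  have h1 := HF_hasDerivAt p x
  have h2 := HFd_hasDerivAt p x
  have hA := (h2.pow 2)
  have hB : HasDerivAt (fun y : ℝ => 2 * (p : ℝ) + 1 - y ^ 2) (-(2 * x)) x := by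
    have := (hasDerivAt_pow 2 x).const_sub (2 * (p : ℝ) + 1)
    refine this.congr_deriv ?_; push_cast; ring
  have hC := hB.mul (h1.pow 2)
  have := hA.add hC
  have hfun : En p = fun y => HFd p y ^ 2 + (2 * (p : ℝ) + 1 - y ^ 2) * HF p y ^ 2 := rfl
  rw [hfun]
  refine this.congr_deriv ?_
  simp only [Pi.pow_apply]; ring

lemma En_antitone (p : ℕ) {x : ℝ} (hx : 0 ≤ x) : En p x ≤ En p 0 := by
  have h : AntitoneOn (En p) (Set.Ici (0:ℝ)) := by
    apply antitoneOn_of_deriv_nonpos (convex_Ici 0)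
    · exact (continuous_iff_continuousAt.2 fun y => (En_hasDerivAt p y).continuousAt).continuousOn
    · intro y hy
      exact (En_hasDerivAt p y).differentiableAt.differentiableWithinAt
    · intro y hy
      rw [interior_Ici] at hy
      rw [(En_hasDerivAt p y).deriv]
      have : (0:ℝ) < y := hy
      nlinarith [sq_nonneg (HF p y)]
  exact h (Set.self_mem_Ici) hx hx

lemma physHermite_odd_zero : ∀ q : ℕ, physHermite (2 * q + 1) 0 = 0
  | 0 => by simp [physHermite_one]
  | (q + 1) => by
      have h := physHermite_odd_zero q
      have : 2 * (q + 1) + 1 = (2 * q + 1) + 2 := by ring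
      rw [this, physHermite_add_two, h]
      ring

lemma physHermite_even_zero : ∀ q : ℕ,
    physHermite (2 * q) 0 = (-1 : ℝ) ^ q * (Nat.factorial (2 * q) : ℝ) / (Nat.factorial q : ℝ)
  | 0 => by simp [physHermite_zero, Nat.factorial]
  | (q + 1) => by
      have h := physHermite_even_zero q
      have h2 : 2 * (q + 1) = (2 * q) + 2 := by ring
      rw [h2, physHermite_add_two, h]
      have hf1 : (Nat.factorial (2 * q + 2) : ℝ) =
          ((2 * q + 2) : ℝ) * ((2 * q + 1) : ℝ) * (Nat.factorial (2 * q) : ℝ) := by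
        rw [show 2 * q + 2 = (2 * q + 1) + 1 from rfl, Nat.factorial_succ, Nat.factorial_succ]
        push_cast; ring
      have hf2 : (Nat.factorial (q + 1) : ℝ) = ((q : ℝ) + 1) * (Nat.factorial q : ℝ) := by
        rw [Nat.factorial_succ]; push_cast; ring
      rw [hf1, hf2]
      have hq : (Nat.factorial q : ℝ) ≠ 0 := Nat.cast_ne_zero.2 (Nat.factorial_ne_zero q)
      have hq1 : ((q : ℝ) + 1) ≠ 0 := by positivity
      field_simp
      push_cast; ring

lemma central_binom_bound : ∀ q : ℕ,
    (Nat.factorial (2 * q) : ℝ) * Real.sqrt ((q : ℝ) + 1) ≤ 4 ^ q * (Nat.factorial q : ℝ) ^ 2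
  | 0 => by simp [Nat.factorial]
  | (q + 1) => by
      have ih := central_binom_bound q
      have s1 : Real.sqrt ((q : ℝ) + 1) ^ 2 = (q : ℝ) + 1 := Real.sq_sqrt (by positivity)
      have s2 : Real.sqrt ((q : ℝ) + 2) ^ 2 = (q : ℝ) + 2 := Real.sq_sqrt (by positivity)
      have s1n : 0 ≤ Real.sqrt ((q : ℝ) + 1) := Real.sqrt_nonneg _
      have s2n : 0 ≤ Real.sqrt ((q : ℝ) + 2) := Real.sqrt_nonneg _
      have s1pos : 0 < Real.sqrt ((q : ℝ) + 1) := Real.sqrt_pos.2 (by positivity)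
      -- key: (2q+1) √(q+2) ≤ 2(q+1) √(q+1)
      have key : (2 * (q : ℝ) + 1) * Real.sqrt ((q : ℝ) + 2)
          ≤ 2 * ((q : ℝ) + 1) * Real.sqrt ((q : ℝ) + 1) := by
        have l1 : (2 * (q : ℝ) + 1) * Real.sqrt ((q : ℝ) + 2)
            = Real.sqrt ((2 * (q : ℝ) + 1) ^ 2 * ((q : ℝ) + 2)) := by
          rw [Real.sqrt_mul (by positivity), Real.sqrt_sq (by positivity)]
        have l2 : 2 * ((q : ℝ) + 1) * Real.sqrt ((q : ℝ) + 1)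
            = Real.sqrt ((2 * ((q : ℝ) + 1)) ^ 2 * ((q : ℝ) + 1)) := by
          rw [Real.sqrt_mul (by positivity), Real.sqrt_sq (by positivity)]
        rw [l1, l2]
        apply Real.sqrt_le_sqrt
        nlinarith [sq_nonneg ((q:ℝ))]
      have hf1 : (Nat.factorial (2 * (q + 1)) : ℝ) =
          (2 * (q : ℝ) + 2) * (2 * (q : ℝ) + 1) * (Nat.factorial (2 * q) : ℝ) := by
        rw [show 2 * (q + 1) = (2 * q + 1) + 1 by ring, Nat.factorial_succ, Nat.factorial_succ]
        push_cast; ring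
      have hf2 : (Nat.factorial (q + 1) : ℝ) = ((q : ℝ) + 1) * (Nat.factorial q : ℝ) := by
        rw [Nat.factorial_succ]; push_cast; ring
      have hcast : ((q + 1 : ℕ) : ℝ) + 1 = (q : ℝ) + 2 := by push_cast; ring
      rw [hf1, hf2, hcast]
      have hfq : (0:ℝ) ≤ (Nat.factorial (2 * q) : ℝ) := by positivity
      -- multiply ih by (2q+2)(2q+1)·(√(q+2)/√(q+1)) bounded via key
      -- target: (2q+2)(2q+1)(2q)! √(q+2) ≤ 4^{q+1} ((q+1)(q!))^2
      have step1 : (2 * (q : ℝ) + 2) * ((2 * (q : ℝ) + 1) * Real.sqrt ((q : ℝ) + 2))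
            * (Nat.factorial (2 * q) : ℝ) * Real.sqrt ((q:ℝ) + 1)
          ≤ (2 * (q : ℝ) + 2) * (2 * ((q : ℝ) + 1) * Real.sqrt ((q : ℝ) + 1))
            * (4 ^ q * (Nat.factorial q : ℝ) ^ 2) := by
        have h1 : (2 * (q : ℝ) + 2) * ((2 * (q : ℝ) + 1) * Real.sqrt ((q : ℝ) + 2))
              * (Nat.factorial (2 * q) : ℝ) * Real.sqrt ((q:ℝ) + 1)
            ≤ (2 * (q : ℝ) + 2) * (2 * ((q : ℝ) + 1) * Real.sqrt ((q : ℝ) + 1))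
              * ((Nat.factorial (2 * q) : ℝ) * Real.sqrt ((q:ℝ) + 1)) := by
          nlinarith [mul_le_mul_of_nonneg_left key (by positivity : (0:ℝ) ≤ 2 * (q:ℝ) + 2),
            mul_nonneg hfq s1n]
        refine h1.trans ?_
        have h2 : (0:ℝ) ≤ (2 * (q : ℝ) + 2) * (2 * ((q : ℝ) + 1) * Real.sqrt ((q : ℝ) + 1)) := by
          positivity
        nlinarith [mul_le_mul_of_nonneg_left ih h2]
      -- divide by √(q+1)
      have final : (Nat.factorial (2 * (q+1)) : ℝ) * Real.sqrt ((q : ℝ) + 2)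
          ≤ 4 ^ (q + 1) * (((q : ℝ) + 1) * (Nat.factorial q : ℝ)) ^ 2 := by
        rw [hf1]
        rw [show (4:ℝ) ^ (q+1) = 4 * 4 ^ q from by ring]
        have := le_of_mul_le_mul_right (by nlinarith [step1] :
          ((2 * (q : ℝ) + 2) * (2 * (q : ℝ) + 1) * (Nat.factorial (2 * q) : ℝ)
            * Real.sqrt ((q:ℝ) + 2)) * Real.sqrt ((q:ℝ)+1)
          ≤ (4 * 4 ^ q * (((q : ℝ) + 1) * (Nat.factorial q : ℝ)) ^ 2) * Real.sqrt ((q:ℝ)+1)) s1pos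
        linarith [this]
      rw [hf1] at final
      exact final

lemma Nsq (a : ℝ) (ha : 0 < a) : (a ^ (-(1:ℝ)/2)) ^ 2 = a⁻¹ := by
  rw [← Real.rpow_natCast (a ^ (-(1:ℝ)/2)) 2, ← Real.rpow_mul ha.le]
  norm_num
  exact Real.rpow_neg_one a

lemma HF_zero (p : ℕ) : HF p 0 =
    ((2 : ℝ) ^ p * (Nat.factorial p : ℝ) * Real.sqrt Real.pi) ^ (-(1 : ℝ) / 2)
      * physHermite p 0 := by
  simp [HF]

lemma HFd_zero (p : ℕ) : HFd p 0 =
    ((2 : ℝ) ^ p * (Nat.factorial p : ℝ) * Real.sqrt Real.pi) ^ (-(1 : ℝ) / 2)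
      * (2 * (p : ℝ) * physHermite (p - 1) 0) := by
  simp [HFd]

lemma sqrt_pi_ge_one : (1:ℝ) ≤ Real.sqrt Real.pi := by
  rw [show (1:ℝ) = Real.sqrt 1 from (Real.sqrt_one).symm]
  exact Real.sqrt_le_sqrt (by linarith [Real.pi_gt_three])

lemma div_sqrt_le (A B C : ℝ) (hA : 0 ≤ A) (hC : A ≤ C) (hB : 0 < B)
    (h : A ^ 2 ≤ 16 * C * B) : A / Real.sqrt B ≤ 4 * Real.sqrt C := by
  have hBs : 0 < Real.sqrt B := Real.sqrt_pos.2 hB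
  rw [div_le_iff₀ hBs]
  have h1 : A = Real.sqrt (A ^ 2) := (Real.sqrt_sq hA).symm
  have h2 : Real.sqrt (A ^ 2) ≤ Real.sqrt (16 * (C * B)) :=
    Real.sqrt_le_sqrt (by nlinarith)
  have h3 : Real.sqrt (16 * (C * B)) = 4 * (Real.sqrt C * Real.sqrt B) := by
    rw [Real.sqrt_mul (by norm_num : (0:ℝ) ≤ 16) (C * B),
      Real.sqrt_mul (by linarith : (0:ℝ) ≤ C) B,
      show (16:ℝ) = 4 ^ 2 by norm_num, Real.sqrt_sq (by norm_num : (0:ℝ) ≤ 4)]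
  calc A = Real.sqrt (A ^ 2) := h1
    _ ≤ Real.sqrt (16 * (C * B)) := h2
    _ = 4 * Real.sqrt C * Real.sqrt B := by rw [h3]; ring

lemma En_zero_le (p : ℕ) : En p 0 ≤ 4 * Real.sqrt (2 * (p : ℝ) + 1) := by
  have hπ : (0:ℝ) < Real.sqrt Real.pi := lt_of_lt_of_le one_pos sqrt_pi_ge_one
  rcases Nat.even_or_odd p with ⟨q, hq⟩ | ⟨q, hq⟩
  · -- p = 2q
    subst hq
    rw [show q + q = 2 * q by ring] at *
    set Fq : ℝ := (Nat.factorial q : ℝ) with hFq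
    set F2 : ℝ := (Nat.factorial (2 * q) : ℝ) with hF2
    have hFqp : 0 < Fq := by positivity
    have hF2p : 0 < F2 := by positivity
    have s1pos : 0 < Real.sqrt ((q:ℝ) + 1) := Real.sqrt_pos.2 (by positivity)
    set a : ℝ := (2 : ℝ) ^ (2 * q) * F2 * Real.sqrt Real.pi with ha
    have hap : 0 < a := by positivity
    have h24 : (2:ℝ) ^ (2 * q) = 4 ^ q := by rw [pow_mul]; norm_num
    have hfirst : HFd (2 * q) 0 = 0 := by
      rw [HFd_zero]
      rcases Nat.eq_zero_or_pos q with h0 | h0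
      · subst h0; norm_num
      · have : 2 * q - 1 = 2 * (q - 1) + 1 := by omega
        rw [this, physHermite_odd_zero (q - 1)]
        ring
    have hph2 : physHermite (2 * q) 0 ^ 2 = F2 ^ 2 / Fq ^ 2 := by
      rw [physHermite_even_zero q]
      rw [div_pow, mul_pow, ← pow_mul, mul_comm q 2, pow_mul]
      norm_num; rfl
    have hEn : En (2 * q) 0 = (2 * ((2 * q : ℕ) : ℝ) + 1) * (a⁻¹ * (F2 ^ 2 / Fq ^ 2)) := by
      rw [En, hfirst, HF_zero, mul_pow, Nsq a hap, hph2]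
      push_cast
      ring
    have hX : a⁻¹ * (F2 ^ 2 / Fq ^ 2) ≤ 1 / Real.sqrt ((q:ℝ) + 1) := by
      have heq : a⁻¹ * (F2 ^ 2 / Fq ^ 2) = F2 ^ 2 / (a * Fq ^ 2) := by
        field_simp
      rw [heq, div_le_div_iff₀ (by positivity) s1pos, ha, h24]
      have cb := central_binom_bound q
      have step1 : F2 * Real.sqrt ((q:ℝ)+1) * F2 ≤ 4 ^ q * Fq ^ 2 * F2 :=
        mul_le_mul_of_nonneg_right cb hF2p.le
      have step2 : 4 ^ q * Fq ^ 2 * F2 ≤ 4 ^ q * F2 * Real.sqrt Real.pi * Fq ^ 2 := by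
        nlinarith [sqrt_pi_ge_one,
          mul_pos (mul_pos (pow_pos (by norm_num : (0:ℝ) < 4) q) hF2p) (mul_pos hFqp hFqp)]
      nlinarith [step1, step2]
    have hlast : (2 * ((2 * q : ℕ) : ℝ) + 1) / Real.sqrt ((q:ℝ) + 1)
        ≤ 4 * Real.sqrt (2 * ((2 * q : ℕ) : ℝ) + 1) := by
      push_cast
      exact div_sqrt_le _ _ _ (by positivity) le_rfl (by positivity) (by nlinarith [sq_nonneg ((q:ℝ))])
    calc En (2 * q) 0 = (2 * ((2 * q : ℕ) : ℝ) + 1) * (a⁻¹ * (F2 ^ 2 / Fq ^ 2)) := hEn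
      _ ≤ (2 * ((2 * q : ℕ) : ℝ) + 1) * (1 / Real.sqrt ((q:ℝ) + 1)) := by
          apply mul_le_mul_of_nonneg_left hX (by positivity)
      _ = (2 * ((2 * q : ℕ) : ℝ) + 1) / Real.sqrt ((q:ℝ) + 1) := by ring
      _ ≤ 4 * Real.sqrt (2 * ((2 * q : ℕ) : ℝ) + 1) := hlast
  · -- p = 2q+1
    subst hq
    set Fq : ℝ := (Nat.factorial q : ℝ) with hFq
    set F2 : ℝ := (Nat.factorial (2 * q) : ℝ) with hF2
    have hFqp : 0 < Fq := by positivity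
    have hF2p : 0 < F2 := by positivity
    have s1pos : 0 < Real.sqrt ((q:ℝ) + 1) := Real.sqrt_pos.2 (by positivity)
    set a : ℝ := (2 : ℝ) ^ (2 * q + 1) * (Nat.factorial (2 * q + 1) : ℝ) * Real.sqrt Real.pi
      with ha
    have hap : 0 < a := by positivity
    have e1 : (2:ℝ) ^ (2 * q + 1) = 2 * 4 ^ q := by
      rw [pow_succ, pow_mul]; norm_num [mul_comm]
    have e2 : ((Nat.factorial (2 * q + 1)) : ℝ) = (2 * (q:ℝ) + 1) * F2 := by
      rw [Nat.factorial_succ]; push_cast; ring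
    have haeq : a = 2 * 4 ^ q * ((2 * (q:ℝ) + 1) * F2) * Real.sqrt Real.pi := by
      rw [ha, e1, e2]
    have hsecond : physHermite (2 * q + 1) 0 = 0 := physHermite_odd_zero q
    have hph2 : physHermite (2 * q + 1 - 1) 0 ^ 2 = F2 ^ 2 / Fq ^ 2 := by
      rw [show 2 * q + 1 - 1 = 2 * q from rfl, physHermite_even_zero q]
      rw [div_pow, mul_pow, ← pow_mul, mul_comm q 2, pow_mul]
      norm_num; rfl
    have hEn : En (2 * q + 1) 0
        = 4 * (2 * (q:ℝ) + 1) ^ 2 * (a⁻¹ * (F2 ^ 2 / Fq ^ 2)) := by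
      rw [En, HF_zero, HFd_zero, hsecond, mul_pow, mul_pow, Nsq a hap, hph2]
      push_cast
      ring
    have hX : a⁻¹ * (F2 ^ 2 / Fq ^ 2) ≤ 1 / (2 * (2 * (q:ℝ) + 1) * Real.sqrt ((q:ℝ) + 1)) := by
      have heq : a⁻¹ * (F2 ^ 2 / Fq ^ 2) = F2 ^ 2 / (a * Fq ^ 2) := by field_simp
      rw [heq, div_le_div_iff₀ (by positivity) (by positivity), haeq]
      have cb := central_binom_bound q
      have step1 : 2 * (2 * (q:ℝ) + 1) * F2 * (F2 * Real.sqrt ((q:ℝ)+1))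
          ≤ 2 * (2 * (q:ℝ) + 1) * F2 * (4 ^ q * Fq ^ 2) := by
        have hnn : (0:ℝ) ≤ 2 * (2 * (q:ℝ) + 1) * F2 :=
          mul_nonneg (by positivity) hF2p.le
        exact mul_le_mul_of_nonneg_left cb hnn
      have base : (0:ℝ) ≤ 2 * (2 * (q:ℝ) + 1) * F2 * (4 ^ q * Fq ^ 2) :=
        mul_nonneg (mul_nonneg (by positivity) hF2p.le)
          (mul_nonneg (by positivity) (by positivity))
      have step2 : 2 * (2 * (q:ℝ) + 1) * F2 * (4 ^ q * Fq ^ 2)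
          ≤ 2 * 4 ^ q * ((2 * (q:ℝ) + 1) * F2) * Real.sqrt Real.pi * Fq ^ 2 := by
        calc 2 * (2 * (q:ℝ) + 1) * F2 * (4 ^ q * Fq ^ 2)
            = 2 * (2 * (q:ℝ) + 1) * F2 * (4 ^ q * Fq ^ 2) * 1 := by ring
          _ ≤ 2 * (2 * (q:ℝ) + 1) * F2 * (4 ^ q * Fq ^ 2) * Real.sqrt Real.pi :=
              mul_le_mul_of_nonneg_left sqrt_pi_ge_one base
          _ = 2 * 4 ^ q * ((2 * (q:ℝ) + 1) * F2) * Real.sqrt Real.pi * Fq ^ 2 := by ring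
      calc F2 ^ 2 * (2 * (2 * (q:ℝ) + 1) * Real.sqrt ((q:ℝ) + 1))
          = 2 * (2 * (q:ℝ) + 1) * F2 * (F2 * Real.sqrt ((q:ℝ) + 1)) := by ring
        _ ≤ 2 * (2 * (q:ℝ) + 1) * F2 * (4 ^ q * Fq ^ 2) := step1
        _ ≤ 2 * 4 ^ q * ((2 * (q:ℝ) + 1) * F2) * Real.sqrt Real.pi * Fq ^ 2 := step2
        _ = 1 * (2 * 4 ^ q * ((2 * (q:ℝ) + 1) * F2) * Real.sqrt Real.pi * Fq ^ 2) := by ring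
    have hlast : 4 * (2 * (q:ℝ) + 1) ^ 2 * (1 / (2 * (2 * (q:ℝ) + 1) * Real.sqrt ((q:ℝ) + 1)))
        ≤ 4 * Real.sqrt (2 * ((2 * q + 1 : ℕ) : ℝ) + 1) := by
      have heq2 : 4 * (2 * (q:ℝ) + 1) ^ 2 * (1 / (2 * (2 * (q:ℝ) + 1) * Real.sqrt ((q:ℝ) + 1)))
          = (4 * (q:ℝ) + 2) / Real.sqrt ((q:ℝ) + 1) := by
        rw [eq_div_iff (ne_of_gt s1pos)]
        field_simp
        ring
      rw [heq2]
      have : (2 * ((2 * q + 1 : ℕ) : ℝ) + 1) = 4 * (q:ℝ) + 3 := by push_cast; ring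
      rw [this]
      exact div_sqrt_le _ _ _ (by positivity) (by linarith) (by positivity)
        (by nlinarith [sq_nonneg ((q:ℝ))])
    calc En (2 * q + 1) 0 = 4 * (2 * (q:ℝ) + 1) ^ 2 * (a⁻¹ * (F2 ^ 2 / Fq ^ 2)) := hEn
      _ ≤ 4 * (2 * (q:ℝ) + 1) ^ 2 * (1 / (2 * (2 * (q:ℝ) + 1) * Real.sqrt ((q:ℝ) + 1))) := by
          apply mul_le_mul_of_nonneg_left hX (by positivity)
      _ ≤ 4 * Real.sqrt (2 * ((2 * q + 1 : ℕ) : ℝ) + 1) := hlast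

lemma HFd_sq_le (p : ℕ) {x : ℝ} (hx : 0 ≤ x) (hx2 : x ^ 2 ≤ 2 * (p:ℝ) + 1) :
    HFd p x ^ 2 ≤ 4 * Real.sqrt (2 * (p:ℝ) + 1) := by
  have h := (En_antitone p hx).trans (En_zero_le p)
  have h2 : 0 ≤ (2 * (p:ℝ) + 1 - x ^ 2) * HF p x ^ 2 :=
    mul_nonneg (by linarith) (sq_nonneg _)
  unfold En at h
  linarith

lemma HF_sq_le (p : ℕ) {x : ℝ} (hx : 0 ≤ x) :
    (2 * (p:ℝ) + 1 - x ^ 2) * HF p x ^ 2 ≤ 4 * Real.sqrt (2 * (p:ℝ) + 1) := by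
  have h := (En_antitone p hx).trans (En_zero_le p)
  unfold En at h
  nlinarith [sq_nonneg (HFd p x)]

lemma abs_le_two_sqrt {h c : ℝ} (h2 : h ^ 2 ≤ 4 * c) : |h| ≤ 2 * Real.sqrt c := by
  have hc : 0 ≤ c := by nlinarith [sq_nonneg h]
  have : |h| = Real.sqrt (h ^ 2) := (Real.sqrt_sq_eq_abs h).symm
  rw [this]
  calc Real.sqrt (h ^ 2) ≤ Real.sqrt (4 * c) := Real.sqrt_le_sqrt h2
    _ = 2 * Real.sqrt c := by
        rw [show (4:ℝ) * c = 2 ^ 2 * c by norm_num, Real.sqrt_mul (by positivity) c,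
          Real.sqrt_sq (by norm_num : (0:ℝ) ≤ 2)]

lemma phi_eq (μ x : ℝ) : Real.sqrt (1 + x ^ 2) ^ μ = (1 + x ^ 2) ^ (μ / 2) := by
  rw [Real.sqrt_eq_rpow, ← Real.rpow_mul (by positivity : (0:ℝ) ≤ 1 + x ^ 2),
    show (1:ℝ) / 2 * μ = μ / 2 by ring]

lemma phi_hasDerivAt (μ x : ℝ) :
    HasDerivAt (fun y => Real.sqrt (1 + y ^ 2) ^ μ) (μ * x * (1 + x ^ 2) ^ (μ / 2 - 1)) x := by
  have hbase : HasDerivAt (fun y : ℝ => 1 + y ^ 2) (2 * x) x := by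
    have := (hasDerivAt_pow 2 x).const_add (1:ℝ)
    refine this.congr_deriv ?_
    push_cast; ring
  have h := hbase.rpow_const (p := μ / 2) (Or.inl (by positivity))
  have hfun : (fun y => Real.sqrt (1 + y ^ 2) ^ μ) = fun y : ℝ => (1 + y ^ 2) ^ (μ / 2) :=
    funext fun y => phi_eq μ y
  rw [hfun]
  convert h using 1
  ring

noncomputable def wfun (μ k : ℝ) (x : ℝ) : ℂ :=
  (Real.sqrt (1 + x ^ 2) ^ μ : ℝ) * Complex.exp (Complex.I * k * x)

noncomputable def wfd (μ k : ℝ) (x : ℝ) : ℂ :=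
  ((μ * x * (1 + x ^ 2) ^ (μ / 2 - 1) : ℝ) : ℂ) * Complex.exp (Complex.I * k * x) +
    ((Real.sqrt (1 + x ^ 2) ^ μ : ℝ) : ℂ) * (Complex.I * k * Complex.exp (Complex.I * k * x))

lemma cexp_hasDerivAt (k x : ℝ) :
    HasDerivAt (fun y : ℝ => Complex.exp (Complex.I * k * y))
      (Complex.I * k * Complex.exp (Complex.I * k * x)) x := by
  have h0 : HasDerivAt (fun y : ℝ => (y : ℂ)) 1 x := (hasDerivAt_id x).ofReal_comp
  have h1 := h0.const_mul (Complex.I * (k : ℂ))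
  have h2 := h1.cexp
  convert h2 using 1
  ring

lemma wfun_hasDerivAt (μ k x : ℝ) : HasDerivAt (wfun μ k) (wfd μ k x) x := by
  have h1 := (phi_hasDerivAt μ x).ofReal_comp
  have h2 := cexp_hasDerivAt k x
  have h3 := h1.mul h2
  have hfun : wfun μ k = fun y : ℝ =>
      ((Real.sqrt (1 + y ^ 2) ^ μ : ℝ) : ℂ) * Complex.exp (Complex.I * k * y) := rfl
  rw [hfun]
  exact h3.congr_deriv rfl

lemma wfun_continuous (μ k : ℝ) : Continuous (wfun μ k) :=
  continuous_iff_continuousAt.2 fun x => (wfun_hasDerivAt μ k x).continuousAt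

lemma cexp_continuous (k : ℝ) : Continuous (fun x : ℝ => Complex.exp (Complex.I * k * x)) :=
  Complex.continuous_exp.comp (continuous_const.mul Complex.continuous_ofReal)

lemma wfd_continuous (μ k : ℝ) : Continuous (wfd μ k) := by
  have c0 : Continuous (fun x : ℝ => 1 + x ^ 2) := by continuity
  have c1 : Continuous (fun x : ℝ => μ * x * (1 + x ^ 2) ^ (μ / 2 - 1)) :=
    (continuous_const.mul continuous_id).mul
      (c0.rpow_const (fun x => Or.inl (by positivity)))
  have c3 : Continuous (fun x : ℝ => Real.sqrt (1 + x ^ 2) ^ μ) :=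
    continuous_iff_continuousAt.2 fun x => (phi_hasDerivAt μ x).continuousAt
  exact ((Complex.continuous_ofReal.comp c1).mul (cexp_continuous k)).add
    ((Complex.continuous_ofReal.comp c3).mul (continuous_const.mul (cexp_continuous k)))

lemma norm_cexp_eq_one (k x : ℝ) : ‖Complex.exp (Complex.I * k * x)‖ = 1 := by
  rw [Complex.norm_exp]
  have : (Complex.I * k * x).re = 0 := by simp
  rw [this, Real.exp_zero]

noncomputable def Wr (p r : ℕ) (x : ℝ) : ℝ := HF p x * HFd r x - HFd p x * HF r x

lemma Wr_hasDerivAt (p r : ℕ) (x : ℝ) :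
    HasDerivAt (Wr p r) ((2 * (p:ℝ) - 2 * (r:ℝ)) * (HF p x * HF r x)) x := by
  have h := ((HF_hasDerivAt p x).mul (HFd_hasDerivAt r x)).sub
    ((HFd_hasDerivAt p x).mul (HF_hasDerivAt r x))
  have hfun : Wr p r = fun y => HF p y * HFd r y - HFd p y * HF r y := rfl
  rw [hfun]
  refine h.congr_deriv ?_
  ring

lemma Wr_continuous (p r : ℕ) : Continuous (Wr p r) :=
  ((HF_continuous p).mul (HFd_continuous r)).sub ((HFd_continuous p).mul (HF_continuous r))

lemma Gf_hasDerivAt (μ k : ℝ) (p r : ℕ) (x : ℝ) :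
    HasDerivAt (fun y => wfun μ k y * ((Wr p r y : ℝ) : ℂ))
      (wfd μ k x * ((Wr p r x : ℝ) : ℂ) +
        wfun μ k x * (((2 * (p:ℝ) - 2 * (r:ℝ)) * (HF p x * HF r x) : ℝ) : ℂ)) x :=
  (wfun_hasDerivAt μ k x).mul ((Wr_hasDerivAt p r x).ofReal_comp)

lemma phid_abs_le (μ : ℝ) (hμ0 : 0 ≤ μ) (hμ1 : μ ≤ 1) (x : ℝ) :
    |μ * x * (1 + x ^ 2) ^ (μ / 2 - 1)| ≤ (1 + x ^ 2) ^ (μ / 2) := by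
  have hb : (0:ℝ) < 1 + x ^ 2 := by positivity
  have h1 : |μ * x * (1 + x ^ 2) ^ (μ / 2 - 1)| = μ * |x| * (1 + x ^ 2) ^ (μ / 2 - 1) := by
    rw [abs_mul, abs_mul, abs_of_nonneg hμ0, abs_of_nonneg (Real.rpow_nonneg hb.le _)]
  rw [h1]
  have hx : |x| ≤ (1 + x ^ 2) ^ ((1:ℝ) / 2) := by
    rw [← Real.sqrt_eq_rpow, ← Real.sqrt_sq_eq_abs]
    exact Real.sqrt_le_sqrt (by nlinarith)
  have h2 : μ * |x| ≤ (1 + x ^ 2) ^ ((1:ℝ) / 2) := by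
    calc μ * |x| ≤ 1 * |x| := mul_le_mul_of_nonneg_right hμ1 (abs_nonneg x)
      _ = |x| := one_mul _
      _ ≤ _ := hx
  calc μ * |x| * (1 + x ^ 2) ^ (μ / 2 - 1)
      ≤ (1 + x ^ 2) ^ ((1:ℝ) / 2) * (1 + x ^ 2) ^ (μ / 2 - 1) :=
        mul_le_mul_of_nonneg_right h2 (Real.rpow_nonneg hb.le _)
    _ = (1 + x ^ 2) ^ ((1:ℝ) / 2 + (μ / 2 - 1)) := (Real.rpow_add hb _ _).symm
    _ ≤ (1 + x ^ 2) ^ (μ / 2) :=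
        Real.rpow_le_rpow_of_exponent_le (by nlinarith) (by linarith)

lemma rpow_sq (x a : ℝ) (hx : 0 ≤ x) : (x ^ a) ^ 2 = x ^ (2 * a) := by
  rw [← Real.rpow_natCast (x ^ a) 2, ← Real.rpow_mul hx]
  norm_num [mul_comm]

set_option maxHeartbeats 1000000 in
/-- estimate on `[0, X_m - X_m^{-1/3}]` when `X_n ≥ 2X_m`. -/
theorem hermite_oscillatory_zero_inner (μ : ℝ) (hμ0 : 0 ≤ μ) (hμ1 : μ < 1 / 3) :
    ∃ C : ℝ, 0 < C ∧ ∃ m₀ : ℕ, 1 ≤ m₀ ∧ ∀ m n : ℕ, m₀ < m → m ≤ n →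
      2 * Xpt m ≤ Xpt n → ∀ k : ℝ, k ≠ 0 →
      ‖∫ x in (0 : ℝ)..(Xpt m - (Xpt m) ^ (-(1 : ℝ) / 3)), osc μ k m n x‖ ≤
        C * (max |k| 1) ^ ((1 : ℝ) / 2) *
          (m : ℝ) ^ (-(1 / 8 - μ / 4)) * (n : ℝ) ^ (-(1 / 8 - μ / 4)) := by
  refine ⟨256, by norm_num, 1, le_rfl, ?_⟩
  intro m n hm1 hmn hXmn k hk
  have hm2 : 2 ≤ m := hm1
  have hn2 : 2 ≤ n := le_trans hm2 hmn
  have hmR : (2:ℝ) ≤ (m:ℝ) := by exact_mod_cast hm2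
  have hnR : (2:ℝ) ≤ (n:ℝ) := by exact_mod_cast hn2
  have hmnR : (m:ℝ) ≤ (n:ℝ) := by exact_mod_cast hmn
  have hm0 : (0:ℝ) < m := by linarith
  have hn0 : (0:ℝ) < n := by linarith
  set p : ℕ := m - 1 with hp
  set r : ℕ := n - 1 with hr
  have hpcast : 2 * (p:ℝ) + 1 = 2 * (m:ℝ) - 1 := by
    rw [hp, Nat.cast_sub (by omega : 1 ≤ m)]; push_cast; ring
  have hrcast : 2 * (r:ℝ) + 1 = 2 * (n:ℝ) - 1 := by
    rw [hr, Nat.cast_sub (by omega : 1 ≤ n)]; push_cast; ring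
  set X := Xpt m with hXdef
  set Y := Xpt n with hYdef
  have hXsq : X ^ 2 = 2 * (m:ℝ) - 1 := Real.sq_sqrt (by linarith)
  have hYsq : Y ^ 2 = 2 * (n:ℝ) - 1 := Real.sq_sqrt (by linarith)
  have hX1 : 1 ≤ X := by
    have h := Real.sqrt_le_sqrt (show (1:ℝ) ≤ 2 * (m:ℝ) - 1 by linarith)
    rw [Real.sqrt_one] at h
    exact h
  have hXpos : 0 < X := lt_of_lt_of_le one_pos hX1
  have hY0 : (0:ℝ) ≤ Y := Real.sqrt_nonneg _
  have hsqlm : Real.sqrt (2 * (m:ℝ) - 1) = X := rfl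
  have hsqln : Real.sqrt (2 * (n:ℝ) - 1) = Y := rfl
  set eps := X ^ (-(1:ℝ)/3) with heps
  have hepspos : 0 < eps := Real.rpow_pos_of_pos hXpos _
  have heps1 : eps ≤ 1 := Real.rpow_le_one_of_one_le_of_nonpos hX1 (by norm_num)
  set T := X - eps with hT
  have hT0 : 0 ≤ T := by rw [hT]; linarith
  have hTX : T < X := by rw [hT]; linarith
  -- spectral gap
  have h4lm : 4 * (2 * (m:ℝ) - 1) ≤ 2 * (n:ℝ) - 1 := by
    have h := mul_self_le_mul_self (by linarith : (0:ℝ) ≤ 2 * X) hXmn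
    nlinarith only [h, hXsq, hYsq]
  have hDelta : (n:ℝ) ≤ (2 * (n:ℝ) - 1) - (2 * (m:ℝ) - 1) := by linarith
  -- rpow quantities
  set am := (m:ℝ) ^ ((1:ℝ)/4) with ham
  set an := (n:ℝ) ^ ((1:ℝ)/4) with han
  set em := (m:ℝ) ^ (μ/2) with hem
  have hampos : 0 < am := Real.rpow_pos_of_pos hm0 _
  have hanpos : 0 < an := Real.rpow_pos_of_pos hn0 _
  have hempos : 0 < em := Real.rpow_pos_of_pos hm0 _
  have han1 : 1 ≤ an := by
    have h : (1:ℝ) ^ ((1:ℝ)/4) ≤ (n:ℝ) ^ ((1:ℝ)/4) :=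
      Real.rpow_le_rpow zero_le_one (by linarith) (by norm_num)
    rw [Real.one_rpow] at h
    exact h
  have hamle : am ≤ an := Real.rpow_le_rpow hm0.le hmnR (by norm_num)
  have ham4 : am ^ 4 = (m:ℝ) := by
    rw [ham, ← Real.rpow_natCast ((m:ℝ) ^ ((1:ℝ)/4)) 4, ← Real.rpow_mul hm0.le]
    norm_num
  have han4 : an ^ 4 = (n:ℝ) := by
    rw [han, ← Real.rpow_natCast ((n:ℝ) ^ ((1:ℝ)/4)) 4, ← Real.rpow_mul hn0.le]
    norm_num
  have ham2 : am ^ 2 = Real.sqrt (m:ℝ) := by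
    rw [ham, ← Real.rpow_natCast ((m:ℝ) ^ ((1:ℝ)/4)) 2, ← Real.rpow_mul hm0.le,
      Real.sqrt_eq_rpow]
    norm_num
  have han2 : an ^ 2 = Real.sqrt (n:ℝ) := by
    rw [han, ← Real.rpow_natCast ((n:ℝ) ^ ((1:ℝ)/4)) 2, ← Real.rpow_mul hn0.le,
      Real.sqrt_eq_rpow]
    norm_num
  have hXle : X ≤ 2 * am ^ 2 := by
    rw [ham2]
    calc X = Real.sqrt (2 * (m:ℝ) - 1) := rfl
      _ ≤ Real.sqrt (4 * (m:ℝ)) := Real.sqrt_le_sqrt (by linarith)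
      _ = 2 * Real.sqrt (m:ℝ) := by
          rw [show (4:ℝ) * (m:ℝ) = 2 ^ 2 * (m:ℝ) by norm_num,
            Real.sqrt_mul (by positivity) (m:ℝ), Real.sqrt_sq (by norm_num : (0:ℝ) ≤ 2)]
  have hYle : Y ≤ 2 * an ^ 2 := by
    rw [han2]
    calc Y = Real.sqrt (2 * (n:ℝ) - 1) := rfl
      _ ≤ Real.sqrt (4 * (n:ℝ)) := Real.sqrt_le_sqrt (by linarith)
      _ = 2 * Real.sqrt (n:ℝ) := by
          rw [show (4:ℝ) * (n:ℝ) = 2 ^ 2 * (n:ℝ) by norm_num,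
            Real.sqrt_mul (by positivity) (n:ℝ), Real.sqrt_sq (by norm_num : (0:ℝ) ≤ 2)]
  have hsX : Real.sqrt X ≤ 2 * am := by
    have hX4 : X ≤ (2 * am) ^ 2 := by nlinarith only [hXle, sq_nonneg am]
    calc Real.sqrt X ≤ Real.sqrt ((2 * am) ^ 2) := Real.sqrt_le_sqrt hX4
      _ = 2 * am := Real.sqrt_sq (by positivity)
  have hsY : Real.sqrt Y ≤ 2 * an := by
    have hY4 : Y ≤ (2 * an) ^ 2 := by nlinarith only [hYle, sq_nonneg an]
    calc Real.sqrt Y ≤ Real.sqrt ((2 * an) ^ 2) := Real.sqrt_le_sqrt hY4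
      _ = 2 * an := Real.sqrt_sq (by positivity)
  -- pointwise bounds on the region
  have key_m : ∀ x ∈ Set.Icc (0:ℝ) T,
      |HF p x| ≤ 2 * (Real.sqrt (X - x))⁻¹ ∧ |HF p x| ≤ 4 * am ∧ |HFd p x| ≤ 4 * am := by
    intro x hx
    obtain ⟨hx0, hxT⟩ := hx
    have hxX : x < X := lt_of_le_of_lt hxT hTX
    have hxgap : 0 < X - x := by linarith
    have hepsgap : eps ≤ X - x := by rw [hT] at hxT; linarith
    have hxx := mul_self_le_mul_self hx0 (le_of_lt hxX)
    have hx2 : x ^ 2 ≤ 2 * (m:ℝ) - 1 := by nlinarith only [hxx, hXsq]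
    have hsq := HF_sq_le p hx0
    rw [hpcast, hsqlm] at hsq
    have hsqd := HFd_sq_le p hx0 (by rw [hpcast]; exact hx2)
    rw [hpcast, hsqlm] at hsqd
    have hgap1 : X * (X - x) ≤ (2 * (m:ℝ) - 1) - x ^ 2 := by
      have hxX' := mul_le_mul_of_nonneg_left (le_of_lt hxX) hx0
      nlinarith only [hxX', hXsq]
    have hXinv : eps⁻¹ ≤ X := by
      have h1 : eps⁻¹ = X ^ ((1:ℝ)/3) := by
        rw [heps, ← Real.rpow_neg hXpos.le]; norm_num
      calc eps⁻¹ = X ^ ((1:ℝ)/3) := h1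
        _ ≤ X ^ (1:ℝ) := Real.rpow_le_rpow_of_exponent_le hX1 (by norm_num)
        _ = X := Real.rpow_one X
    have hb1 : HF p x ^ 2 ≤ 4 * (X - x)⁻¹ := by
      have h1 : X * (X - x) * HF p x ^ 2 ≤ 4 * X := by
        nlinarith only [hsq, mul_le_mul_of_nonneg_right hgap1 (sq_nonneg (HF p x))]
      have h2 : (X - x) * HF p x ^ 2 ≤ 4 := by nlinarith only [h1, hXpos]
      rw [show (4:ℝ) * (X - x)⁻¹ = 4 / (X - x) by ring, le_div_iff₀ hxgap]
      nlinarith only [h2]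
    have habs1 : |HF p x| ≤ 2 * (Real.sqrt (X - x))⁻¹ := by
      have := abs_le_two_sqrt hb1
      rwa [Real.sqrt_inv] at this
    have hinvle : (X - x)⁻¹ ≤ X := by
      calc (X - x)⁻¹ ≤ eps⁻¹ := by
            apply inv_anti₀ hepspos hepsgap
        _ ≤ X := hXinv
    have habs2 : |HF p x| ≤ 4 * am := by
      have hb2 : HF p x ^ 2 ≤ 4 * X := by nlinarith only [hb1, hinvle]
      have := abs_le_two_sqrt hb2
      calc |HF p x| ≤ 2 * Real.sqrt X := this
        _ ≤ 4 * am := by linarith only [hsX]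
    have habs3 : |HFd p x| ≤ 4 * am := by
      have := abs_le_two_sqrt hsqd
      calc |HFd p x| ≤ 2 * Real.sqrt X := this
        _ ≤ 4 * am := by linarith only [hsX]
    exact ⟨habs1, habs2, habs3⟩
  have key_n : ∀ x ∈ Set.Icc (0:ℝ) T,
      |HF r x| ≤ 4 / an ∧ |HFd r x| ≤ 4 * an := by
    intro x hx
    obtain ⟨hx0, hxT⟩ := hx
    have hxX : x < X := lt_of_le_of_lt hxT hTX
    have hxx := mul_self_le_mul_self hx0 (le_of_lt hxX)
    have hx2 : x ^ 2 ≤ 2 * (m:ℝ) - 1 := by nlinarith only [hxx, hXsq]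
    have hgapn : (n:ℝ) ≤ (2 * (n:ℝ) - 1) - x ^ 2 := by
      linarith only [hx2, hDelta]
    have hsq := HF_sq_le r hx0
    rw [hrcast, hsqln] at hsq
    have hsqd := HFd_sq_le r hx0 (by
      rw [hrcast]; linarith only [hx2, h4lm, hmR])
    rw [hrcast, hsqln] at hsqd
    have hb1 : HF r x ^ 2 ≤ 4 * (Y / n) := by
      have h1 : (n:ℝ) * HF r x ^ 2 ≤ 4 * Y := by
        nlinarith only [hsq, mul_le_mul_of_nonneg_right hgapn (sq_nonneg (HF r x))]
      rw [show (4:ℝ) * (Y / n) = 4 * Y / n by ring, le_div_iff₀ hn0]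
      nlinarith only [h1]
    have habs1 : |HF r x| ≤ 4 / an := by
      have h2 := abs_le_two_sqrt hb1
      rw [Real.sqrt_div hY0 (n:ℝ)] at h2
      have h3 : 2 * (Real.sqrt Y / Real.sqrt (n:ℝ)) ≤ 4 / an := by
        rw [← han2, ← mul_div_assoc, div_le_div_iff₀ (by positivity) (by positivity)]
        nlinarith only [mul_le_mul_of_nonneg_right hsY hanpos.le]
      linarith only [h2, h3]
    have habs2 : |HFd r x| ≤ 4 * an := by
      have := abs_le_two_sqrt hsqd
      calc |HFd r x| ≤ 2 * Real.sqrt Y := this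
        _ ≤ 4 * an := by linarith only [hsY]
    exact ⟨habs1, habs2⟩
  -- weight bounds
  have hphi_nonneg : ∀ x : ℝ, 0 ≤ Real.sqrt (1 + x ^ 2) ^ μ :=
    fun x => Real.rpow_nonneg (Real.sqrt_nonneg _) μ
  have hphi : ∀ x ∈ Set.Icc (0:ℝ) T, Real.sqrt (1 + x ^ 2) ^ μ ≤ 2 * em := by
    intro x hx
    obtain ⟨hx0, hxT⟩ := hx
    have hxX : x < X := lt_of_le_of_lt hxT hTX
    have hxx := mul_self_le_mul_self hx0 (le_of_lt hxX)
    have hx2 : x ^ 2 ≤ 2 * (m:ℝ) - 1 := by nlinarith only [hxx, hXsq]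
    rw [phi_eq]
    calc (1 + x ^ 2) ^ (μ/2) ≤ (2 * (m:ℝ)) ^ (μ/2) :=
          Real.rpow_le_rpow (by positivity) (by linarith only [hx2])
            (by linarith only [hμ0])
      _ = (2:ℝ) ^ (μ/2) * em := by rw [Real.mul_rpow (by norm_num) hm0.le, hem]
      _ ≤ 2 * em := by
          have h2 : (2:ℝ) ^ (μ/2) ≤ (2:ℝ) ^ (1:ℝ) :=
            Real.rpow_le_rpow_of_exponent_le one_le_two (by linarith only [hμ0, hμ1])
          rw [Real.rpow_one] at h2
          nlinarith only [h2, hempos]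
  set K := max |k| 1 with hK
  have hK1 : (1:ℝ) ≤ K := le_max_right _ _
  have hkK : |k| ≤ K := le_max_left _ _
  have hwd : ∀ x ∈ Set.Icc (0:ℝ) T, ‖wfd μ k x‖ ≤ 4 * K * em := by
    intro x hx
    have hphix := hphi x hx
    have hphid : |μ * x * (1 + x ^ 2) ^ (μ / 2 - 1)| ≤ 2 * em := by
      calc |μ * x * (1 + x ^ 2) ^ (μ / 2 - 1)| ≤ (1 + x ^ 2) ^ (μ/2) :=
            phid_abs_le μ hμ0 (by linarith only [hμ1]) x
        _ = Real.sqrt (1 + x ^ 2) ^ μ := (phi_eq μ x).symm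
        _ ≤ 2 * em := hphix
    unfold wfd
    calc ‖((μ * x * (1 + x ^ 2) ^ (μ / 2 - 1) : ℝ) : ℂ) * Complex.exp (Complex.I * k * x) +
          ((Real.sqrt (1 + x ^ 2) ^ μ : ℝ) : ℂ) *
            (Complex.I * k * Complex.exp (Complex.I * k * x))‖
        ≤ ‖((μ * x * (1 + x ^ 2) ^ (μ / 2 - 1) : ℝ) : ℂ) * Complex.exp (Complex.I * k * x)‖ +
          ‖((Real.sqrt (1 + x ^ 2) ^ μ : ℝ) : ℂ) *
            (Complex.I * k * Complex.exp (Complex.I * k * x))‖ := norm_add_le _ _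
      _ = |μ * x * (1 + x ^ 2) ^ (μ / 2 - 1)| +
          (Real.sqrt (1 + x ^ 2) ^ μ) * |k| := by
          rw [norm_mul, norm_mul, norm_cexp_eq_one, Complex.norm_real, Complex.norm_real,
            Real.norm_eq_abs, Real.norm_eq_abs, abs_of_nonneg (hphi_nonneg x),
            norm_mul, norm_mul, norm_cexp_eq_one, Complex.norm_I, Complex.norm_real,
            Real.norm_eq_abs]
          ring
      _ ≤ 2 * em + (2 * em) * K := by
          have := mul_le_mul hphix hkK (abs_nonneg k) (by positivity)
          linarith only [this, hphid]
      _ ≤ 4 * K * em := by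
          have h := mul_le_mul_of_nonneg_right hK1 (by positivity : (0:ℝ) ≤ 2 * em)
          linarith only [h]
  -- the basic integral J
  have hcontJ : ContinuousOn (fun x => (Real.sqrt (X - x))⁻¹) (Set.uIcc (0:ℝ) T) := by
    apply ContinuousOn.inv₀
    · exact (Real.continuous_sqrt.comp (continuous_const.sub continuous_id)).continuousOn
    · intro x hx
      rw [Set.uIcc_of_le hT0] at hx
      have : 0 < X - x := by have h := lt_of_le_of_lt hx.2 hTX; linarith only [h]
      exact ne_of_gt (Real.sqrt_pos.2 this)
  have hintJ : IntervalIntegrable (fun x => (Real.sqrt (X - x))⁻¹) volume 0 T :=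
    hcontJ.intervalIntegrable
  have hJ : ∫ x in (0:ℝ)..T, (Real.sqrt (X - x))⁻¹
      = 2 * Real.sqrt X - 2 * Real.sqrt (X - T) := by
    have hderiv : ∀ x ∈ Set.uIcc (0:ℝ) T,
        HasDerivAt (fun y => -2 * Real.sqrt (X - y)) ((Real.sqrt (X - x))⁻¹) x := by
      intro x hx
      rw [Set.uIcc_of_le hT0] at hx
      have hpos : 0 < X - x := by have h := lt_of_le_of_lt hx.2 hTX; linarith only [h]
      have h1 : HasDerivAt (fun y : ℝ => X - y) (-1) x := (hasDerivAt_id x).const_sub X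
      have h2 := (Real.hasDerivAt_sqrt (ne_of_gt hpos)).comp x h1
      have h3 := h2.const_mul (-2:ℝ)
      refine h3.congr_deriv ?_
      have hs : Real.sqrt (X - x) ≠ 0 := ne_of_gt (Real.sqrt_pos.2 hpos)
      field_simp
    have := intervalIntegral.integral_eq_sub_of_hasDerivAt hderiv hintJ
    rw [this]
    ring
  have hsXT : Real.sqrt (X - T) ≤ Real.sqrt X := Real.sqrt_le_sqrt (by linarith only [hT0])
  have hJle : ∫ x in (0:ℝ)..T, (Real.sqrt (X - x))⁻¹ ≤ 2 * Real.sqrt X := by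
    rw [hJ]; linarith only [Real.sqrt_nonneg (X - T)]
  have hJ0 : 0 ≤ ∫ x in (0:ℝ)..T, (Real.sqrt (X - x))⁻¹ := by
    rw [hJ]; linarith only [hsXT]
  -- Bound A
  have hA : ‖∫ x in (0:ℝ)..T, osc μ k m n x‖ ≤ 64 * em * am / an := by
    have hb : ∀ᵐ t ∂(volume.restrict (Set.uIoc (0:ℝ) T)),
        ‖osc μ k m n t‖ ≤ (16 * em / an) * (Real.sqrt (X - t))⁻¹ := by
      apply MeasureTheory.ae_restrict_of_forall_mem measurableSet_uIoc
      intro x hx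
      have hx' : x ∈ Set.Icc (0:ℝ) T := by
        rw [Set.uIoc_of_le hT0] at hx
        exact ⟨le_of_lt hx.1, hx.2⟩
      have h1 := (key_m x hx').1
      have h2 := (key_n x hx').1
      have h3 := hphi x hx'
      have hosc : osc μ k m n x =
          wfun μ k x * ((HF p x : ℝ) : ℂ) * ((HF r x : ℝ) : ℂ) := rfl
      have hwn : ‖wfun μ k x‖ = Real.sqrt (1 + x ^ 2) ^ μ := by
        unfold wfun
        rw [norm_mul, norm_cexp_eq_one, Complex.norm_real, Real.norm_eq_abs,
          abs_of_nonneg (hphi_nonneg x)]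
        ring
      have hsx : 0 < Real.sqrt (X - x) := Real.sqrt_pos.2 (by
        have h := lt_of_le_of_lt hx'.2 hTX; linarith only [h])
      rw [hosc, norm_mul, norm_mul, hwn, Complex.norm_real, Complex.norm_real,
        Real.norm_eq_abs, Real.norm_eq_abs]
      calc Real.sqrt (1 + x ^ 2) ^ μ * |HF p x| * |HF r x|
          ≤ (2 * em) * (2 * (Real.sqrt (X - x))⁻¹) * (4 / an) := by
            apply mul_le_mul _ h2 (abs_nonneg _) (by positivity)
            apply mul_le_mul h3 h1 (abs_nonneg _) (by positivity)
        _ = (16 * em / an) * (Real.sqrt (X - x))⁻¹ := by field_simp; ring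
    have hgint : IntervalIntegrable (fun x => (16 * em / an) * (Real.sqrt (X - x))⁻¹)
        volume 0 T := hintJ.const_mul _
    have hle := (intervalIntegral.norm_integral_le_of_norm_le hT0 ((MeasureTheory.ae_restrict_iff' measurableSet_Ioc).1 (by rwa [Set.uIoc_of_le hT0] at hb)) hgint).trans (le_abs_self _)
    rw [intervalIntegral.integral_const_mul] at hle
    have habs : |16 * em / an * ∫ x in (0:ℝ)..T, (Real.sqrt (X - x))⁻¹|
        = 16 * em / an * ∫ x in (0:ℝ)..T, (Real.sqrt (X - x))⁻¹ :=
      abs_of_nonneg (mul_nonneg (by positivity) hJ0)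
    rw [habs] at hle
    calc ‖∫ x in (0:ℝ)..T, osc μ k m n x‖
        ≤ 16 * em / an * ∫ x in (0:ℝ)..T, (Real.sqrt (X - x))⁻¹ := hle
      _ ≤ 16 * em / an * (2 * Real.sqrt X) := by
          apply mul_le_mul_of_nonneg_left hJle (by positivity)
      _ ≤ 16 * em / an * (2 * (2 * am)) := by
          apply mul_le_mul_of_nonneg_left (by linarith only [hsX]) (by positivity)
      _ = 64 * em * am / an := by field_simp; ring
  -- Part B : Wronskian integration by parts
  have hceq : 2 * (p:ℝ) - 2 * (r:ℝ) = 2 * (m:ℝ) - 2 * (n:ℝ) := by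
    rw [hp, hr, Nat.cast_sub (by omega : 1 ≤ m), Nat.cast_sub (by omega : 1 ≤ n)]
    push_cast; ring
  have hwn : ∀ x : ℝ, ‖wfun μ k x‖ = Real.sqrt (1 + x ^ 2) ^ μ := by
    intro x
    unfold wfun
    rw [norm_mul, norm_cexp_eq_one, Complex.norm_real, Real.norm_eq_abs,
      abs_of_nonneg (hphi_nonneg x)]
    ring
  have hWcont : Continuous (fun x => wfd μ k x * ((Wr p r x : ℝ) : ℂ)) :=
    (wfd_continuous μ k).mul (Complex.continuous_ofReal.comp (Wr_continuous p r))
  have hW2cont : Continuous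
      (fun x => wfun μ k x * (((2 * (p:ℝ) - 2 * (r:ℝ)) * (HF p x * HF r x) : ℝ) : ℂ)) :=
    (wfun_continuous μ k).mul (Complex.continuous_ofReal.comp
      (continuous_const.mul ((HF_continuous p).mul (HF_continuous r))))
  have hFTC := intervalIntegral.integral_eq_sub_of_hasDerivAt
    (f := fun y => wfun μ k y * ((Wr p r y : ℝ) : ℂ))
    (f' := fun x => wfd μ k x * ((Wr p r x : ℝ) : ℂ) +
      wfun μ k x * (((2 * (p:ℝ) - 2 * (r:ℝ)) * (HF p x * HF r x) : ℝ) : ℂ))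
    (a := (0:ℝ)) (b := T)
    (fun x _ => Gf_hasDerivAt μ k p r x)
    ((hWcont.add hW2cont).intervalIntegrable _ _)
  have hsplit : (∫ x in (0:ℝ)..T, (wfd μ k x * ((Wr p r x : ℝ) : ℂ) +
        wfun μ k x * (((2 * (p:ℝ) - 2 * (r:ℝ)) * (HF p x * HF r x) : ℝ) : ℂ)))
      = (∫ x in (0:ℝ)..T, wfd μ k x * ((Wr p r x : ℝ) : ℂ))
        + ∫ x in (0:ℝ)..T,
            wfun μ k x * (((2 * (p:ℝ) - 2 * (r:ℝ)) * (HF p x * HF r x) : ℝ) : ℂ) :=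
    intervalIntegral.integral_add (hWcont.intervalIntegrable _ _)
      (hW2cont.intervalIntegrable _ _)
  have hsec : (∫ x in (0:ℝ)..T,
        wfun μ k x * (((2 * (p:ℝ) - 2 * (r:ℝ)) * (HF p x * HF r x) : ℝ) : ℂ))
      = (((2 * (p:ℝ) - 2 * (r:ℝ)) : ℝ) : ℂ) * ∫ x in (0:ℝ)..T, osc μ k m n x := by
    rw [← intervalIntegral.integral_const_mul]
    apply intervalIntegral.integral_congr
    intro x _
    beta_reduce
    have hosc : osc μ k m n x = wfun μ k x * ((HF p x : ℝ) : ℂ) * ((HF r x : ℝ) : ℂ) := rfl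
    rw [hosc]; push_cast; ring
  have hkey : (((2 * (p:ℝ) - 2 * (r:ℝ)) : ℝ) : ℂ) * (∫ x in (0:ℝ)..T, osc μ k m n x)
      = wfun μ k T * ((Wr p r T : ℝ) : ℂ) - wfun μ k 0 * ((Wr p r 0 : ℝ) : ℂ)
        - ∫ x in (0:ℝ)..T, wfd μ k x * ((Wr p r x : ℝ) : ℂ) := by
    rw [← hsec]
    rw [hsplit] at hFTC
    have := eq_sub_of_add_eq' hFTC
    rw [this]
  -- Wronskian pointwise bound
  have hWr_bound : ∀ x ∈ Set.Icc (0:ℝ) T, |Wr p r x| ≤ 32 * am * an := by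
    intro x hx
    obtain ⟨h1, h2, h3⟩ := key_m x hx
    obtain ⟨h4, h5⟩ := key_n x hx
    have e1 : |HF p x * HFd r x| ≤ (4 * am) * (4 * an) := by
      rw [abs_mul]
      exact mul_le_mul h2 h5 (abs_nonneg _) (by positivity)
    have e2 : |HFd p x * HF r x| ≤ (4 * am) * (4 / an) := by
      rw [abs_mul]
      exact mul_le_mul h3 h4 (abs_nonneg _) (by positivity)
    have h6 : (4:ℝ) / an ≤ 4 * an := by
      rw [div_le_iff₀ hanpos]
      nlinarith only [han1]
    have h7 : |Wr p r x| ≤ |HF p x * HFd r x| + |HFd p x * HF r x| := abs_sub _ _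
    have e3 : (4 * am) * (4 / an) ≤ (4 * am) * (4 * an) :=
      mul_le_mul_of_nonneg_left h6 (by positivity)
    have e4 : (4 * am) * (4 * an) + (4 * am) * (4 * an) = 32 * am * an := by ring
    linarith only [h7, e1, e2, e3, e4]
  -- boundary term bound
  have hbound_pt : ∀ x ∈ Set.Icc (0:ℝ) T,
      ‖wfun μ k x * ((Wr p r x : ℝ) : ℂ)‖ ≤ 64 * em * am * an := by
    intro x hx
    rw [norm_mul, Complex.norm_real, Real.norm_eq_abs, hwn x]
    calc Real.sqrt (1 + x ^ 2) ^ μ * |Wr p r x| ≤ (2 * em) * (32 * am * an) :=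
        mul_le_mul (hphi x hx) (hWr_bound x hx) (abs_nonneg _) (by positivity)
      _ = 64 * em * am * an := by ring
  -- bound on the integral of wfd * Wr
  have hwdW : ‖∫ x in (0:ℝ)..T, wfd μ k x * ((Wr p r x : ℝ) : ℂ)‖
      ≤ 256 * K * em * am * an := by
    have hb : ∀ᵐ t ∂(volume.restrict (Set.uIoc (0:ℝ) T)),
        ‖wfd μ k t * ((Wr p r t : ℝ) : ℂ)‖ ≤
          (4 * K * em) * ((8 * an) * (Real.sqrt (X - t))⁻¹ + 16 * am / an) := by
      apply MeasureTheory.ae_restrict_of_forall_mem measurableSet_uIoc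
      intro x hx
      have hx' : x ∈ Set.Icc (0:ℝ) T := by
        rw [Set.uIoc_of_le hT0] at hx
        exact ⟨le_of_lt hx.1, hx.2⟩
      obtain ⟨h1, h2, h3⟩ := key_m x hx'
      obtain ⟨h4, h5⟩ := key_n x hx'
      rw [norm_mul, Complex.norm_real, Real.norm_eq_abs]
      have hWx : |Wr p r x| ≤ (2 * (Real.sqrt (X - x))⁻¹) * (4 * an) + (4 * am) * (4 / an) := by
        have h7 : |Wr p r x| ≤ |HF p x * HFd r x| + |HFd p x * HF r x| := abs_sub _ _
        have e1 : |HF p x * HFd r x| ≤ (2 * (Real.sqrt (X - x))⁻¹) * (4 * an) := by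
          rw [abs_mul]
          exact mul_le_mul h1 h5 (abs_nonneg _) (by positivity)
        have e2 : |HFd p x * HF r x| ≤ (4 * am) * (4 / an) := by
          rw [abs_mul]
          exact mul_le_mul h3 h4 (abs_nonneg _) (by positivity)
        linarith only [h7, e1, e2]
      have hWx0 : (0:ℝ) ≤ (2 * (Real.sqrt (X - x))⁻¹) * (4 * an) + (4 * am) * (4 / an) := by
        positivity
      calc ‖wfd μ k x‖ * |Wr p r x|
          ≤ (4 * K * em) * ((2 * (Real.sqrt (X - x))⁻¹) * (4 * an) + (4 * am) * (4 / an)) :=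
            mul_le_mul (hwd x hx') hWx (abs_nonneg _) (by positivity)
        _ = (4 * K * em) * ((8 * an) * (Real.sqrt (X - x))⁻¹ + 16 * am / an) := by
            field_simp
            ring
    have hgint : IntervalIntegrable
        (fun t => (4 * K * em) * ((8 * an) * (Real.sqrt (X - t))⁻¹ + 16 * am / an))
        volume 0 T := (((hintJ.const_mul _).add intervalIntegrable_const).const_mul _)
    have hle := (intervalIntegral.norm_integral_le_of_norm_le hT0 ((MeasureTheory.ae_restrict_iff' measurableSet_Ioc).1 (by rwa [Set.uIoc_of_le hT0] at hb)) hgint).trans (le_abs_self _)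
    have hgval : (∫ t in (0:ℝ)..T,
          (4 * K * em) * ((8 * an) * (Real.sqrt (X - t))⁻¹ + 16 * am / an))
        = (4 * K * em) * ((8 * an) * (∫ t in (0:ℝ)..T, (Real.sqrt (X - t))⁻¹)
            + 16 * am / an * T) := by
      rw [intervalIntegral.integral_const_mul,
        intervalIntegral.integral_add (hintJ.const_mul _) intervalIntegrable_const,
        intervalIntegral.integral_const_mul, intervalIntegral.integral_const]
      simp only [smul_eq_mul, sub_zero]
      ring
    have hTle : T ≤ 2 * am ^ 2 := by
      have h := le_of_lt hTX
      linarith only [h, hXle]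
    have hJ4 : (∫ t in (0:ℝ)..T, (Real.sqrt (X - t))⁻¹) ≤ 4 * am := by
      have h : 2 * Real.sqrt X ≤ 4 * am := by linarith only [hsX]
      linarith only [hJle, h]
    have hdivle : 16 * am / an * T ≤ 32 * am ^ 3 / an := by
      have he : 16 * am / an * T = (16 * am * T) / an := by ring
      rw [he]
      have h16 : 16 * am * T ≤ 32 * am ^ 3 := by
        have := mul_le_mul_of_nonneg_left hTle (by positivity : (0:ℝ) ≤ 16 * am)
        linarith only [this]
      gcongr
    have hdivle2 : 32 * am ^ 3 / an ≤ 32 * am * an := by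
      rw [div_le_iff₀ hanpos]
      have hsq2 : am ^ 2 ≤ an ^ 2 := by
        have h := mul_le_mul hamle hamle hampos.le hanpos.le
        nlinarith only [h]
      have h2 := mul_le_mul_of_nonneg_left hsq2 (by positivity : (0:ℝ) ≤ 32 * am)
      nlinarith only [h2]
    have hsum : (8 * an) * (∫ t in (0:ℝ)..T, (Real.sqrt (X - t))⁻¹) + 16 * am / an * T
        ≤ 64 * am * an := by
      have h8 : (8 * an) * (∫ t in (0:ℝ)..T, (Real.sqrt (X - t))⁻¹) ≤ (8 * an) * (4 * am) :=
        mul_le_mul_of_nonneg_left hJ4 (by positivity)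
      have h9 : (8 * an) * (4 * am) + 32 * am * an = 64 * am * an := by ring
      linarith only [h8, h9, hdivle, hdivle2]
    have hsum0 : 0 ≤ (8 * an) * (∫ t in (0:ℝ)..T, (Real.sqrt (X - t))⁻¹) + 16 * am / an * T :=
      add_nonneg (mul_nonneg (by positivity) hJ0)
        (mul_nonneg (by positivity) hT0)
    have habs : |∫ t in (0:ℝ)..T,
          (4 * K * em) * ((8 * an) * (Real.sqrt (X - t))⁻¹ + 16 * am / an)|
        = (4 * K * em) * ((8 * an) * (∫ t in (0:ℝ)..T, (Real.sqrt (X - t))⁻¹)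
            + 16 * am / an * T) := by
      rw [hgval]
      exact abs_of_nonneg (mul_nonneg (by positivity) hsum0)
    rw [habs] at hle
    calc ‖∫ x in (0:ℝ)..T, wfd μ k x * ((Wr p r x : ℝ) : ℂ)‖
        ≤ (4 * K * em) * ((8 * an) * (∫ t in (0:ℝ)..T, (Real.sqrt (X - t))⁻¹)
            + 16 * am / an * T) := hle
      _ ≤ (4 * K * em) * (64 * am * an) :=
          mul_le_mul_of_nonneg_left hsum (by positivity)
      _ = 256 * K * em * am * an := by ring
  -- assemble bound B
  have hT_mem : T ∈ Set.Icc (0:ℝ) T := ⟨hT0, le_rfl⟩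
  have h0_mem : (0:ℝ) ∈ Set.Icc (0:ℝ) T := ⟨le_rfl, hT0⟩
  have hnormc : ‖(((2 * (p:ℝ) - 2 * (r:ℝ)) : ℝ) : ℂ)‖ = 2 * (n:ℝ) - 2 * (m:ℝ) := by
    rw [Complex.norm_real, Real.norm_eq_abs, hceq,
      abs_of_nonpos (by linarith only [hmnR])]
    ring
  have hnormI : (2 * (n:ℝ) - 2 * (m:ℝ)) * ‖∫ x in (0:ℝ)..T, osc μ k m n x‖
      ≤ 384 * K * em * am * an := by
    have hL : (2 * (n:ℝ) - 2 * (m:ℝ)) * ‖∫ x in (0:ℝ)..T, osc μ k m n x‖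
        = ‖(((2 * (p:ℝ) - 2 * (r:ℝ)) : ℝ) : ℂ) * ∫ x in (0:ℝ)..T, osc μ k m n x‖ := by
      rw [norm_mul, hnormc]
    rw [hL, hkey]
    have hR : ‖wfun μ k T * ((Wr p r T : ℝ) : ℂ) - wfun μ k 0 * ((Wr p r 0 : ℝ) : ℂ)
        - ∫ x in (0:ℝ)..T, wfd μ k x * ((Wr p r x : ℝ) : ℂ)‖
        ≤ ‖wfun μ k T * ((Wr p r T : ℝ) : ℂ)‖ + ‖wfun μ k 0 * ((Wr p r 0 : ℝ) : ℂ)‖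
          + ‖∫ x in (0:ℝ)..T, wfd μ k x * ((Wr p r x : ℝ) : ℂ)‖ := by
      calc ‖_ - _ - _‖ ≤ ‖_ - _‖ + ‖_‖ := norm_sub_le _ _
        _ ≤ _ := by
            have := norm_sub_le (wfun μ k T * ((Wr p r T : ℝ) : ℂ))
              (wfun μ k 0 * ((Wr p r 0 : ℝ) : ℂ))
            linarith only [this]
    have hb1 := hbound_pt T hT_mem
    have hb2 := hbound_pt 0 h0_mem
    have hKem : 64 * em * am * an ≤ 64 * K * em * am * an := by
      have h := mul_le_mul_of_nonneg_right hK1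
        (by positivity : (0:ℝ) ≤ 64 * em * am * an)
      nlinarith only [h]
    linarith only [hR, hwdW, hb1, hb2, hKem]
  have hDel : (n:ℝ) ≤ 2 * (n:ℝ) - 2 * (m:ℝ) := by linarith only [hDelta]
  have hB : ‖∫ x in (0:ℝ)..T, osc μ k m n x‖ ≤ 384 * K * em * am / an ^ 3 := by
    have h0 : 0 ≤ ‖∫ x in (0:ℝ)..T, osc μ k m n x‖ := norm_nonneg _
    have h1 : an ^ 4 * ‖∫ x in (0:ℝ)..T, osc μ k m n x‖ ≤ 384 * K * em * am * an := by
      calc an ^ 4 * ‖∫ x in (0:ℝ)..T, osc μ k m n x‖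
          = (n:ℝ) * ‖∫ x in (0:ℝ)..T, osc μ k m n x‖ := by rw [han4]
        _ ≤ (2 * (n:ℝ) - 2 * (m:ℝ)) * ‖∫ x in (0:ℝ)..T, osc μ k m n x‖ :=
            mul_le_mul_of_nonneg_right hDel h0
        _ ≤ 384 * K * em * am * an := hnormI
    rw [le_div_iff₀ (by positivity : (0:ℝ) < an ^ 3)]
    by_contra hcon
    push_neg at hcon
    have h2 := mul_lt_mul_of_pos_right hcon hanpos
    have heq : ‖∫ x in (0:ℝ)..T, osc μ k m n x‖ * an ^ 3 * an
        = an ^ 4 * ‖∫ x in (0:ℝ)..T, osc μ k m n x‖ := by ring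
    linarith only [h1, h2, heq]
  -- combine A and B
  have hApos : (0:ℝ) ≤ 64 * em * am / an := by positivity
  have hprod : ‖∫ x in (0:ℝ)..T, osc μ k m n x‖ * ‖∫ x in (0:ℝ)..T, osc μ k m n x‖
      ≤ (64 * em * am / an) * (384 * K * em * am / an ^ 3) :=
    mul_le_mul hA hB (norm_nonneg _) hApos
  have hK0 : (0:ℝ) < K := lt_of_lt_of_le one_pos hK1
  have hKsq : (K ^ ((1:ℝ)/2)) ^ 2 = K := by
    rw [← Real.rpow_natCast (K ^ ((1:ℝ)/2)) 2, ← Real.rpow_mul hK0.le]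
    norm_num
  have hem2 : em ^ 2 = (m:ℝ) ^ μ := by
    rw [hem, rpow_sq _ _ hm0.le, show 2 * (μ/2) = μ by ring]
  have ham2' : am ^ 2 = (m:ℝ) ^ ((1:ℝ)/2) := by
    rw [ham, rpow_sq _ _ hm0.le]; norm_num
  have hcore : em ^ 2 * am ^ 2 / an ^ 4
      ≤ ((m:ℝ) ^ (-(1/8 - μ/4))) ^ 2 * ((n:ℝ) ^ (-(1/8 - μ/4))) ^ 2 := by
    rw [hem2, ham2', han4, rpow_sq _ _ hm0.le, rpow_sq _ _ hn0.le,
      show 2 * (-(1/8 - μ/4)) = μ/2 - 1/4 by ring]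
    have hmul : (m:ℝ) ^ μ * (m:ℝ) ^ ((1:ℝ)/2) = (m:ℝ) ^ (μ + 1/2) :=
      (Real.rpow_add hm0 _ _).symm
    rw [div_eq_mul_inv, hmul]
    have hsplitm : (m:ℝ) ^ (μ + 1/2) = (m:ℝ) ^ (μ/2 - 1/4) * (m:ℝ) ^ (μ/2 + 3/4) := by
      rw [← Real.rpow_add hm0]; congr 1; ring
    have hsplitn : (n:ℝ) ^ (μ/2 - 1/4) = (n:ℝ) ^ (μ/2 + 3/4) * ((n:ℝ)) ^ (-(1:ℝ)) := by
      rw [← Real.rpow_add hn0]; congr 1; ring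
    have hinv : (n:ℝ) ^ (-(1:ℝ)) = ((n:ℝ))⁻¹ := Real.rpow_neg_one (n:ℝ)
    have hmono : (m:ℝ) ^ (μ/2 + 3/4) ≤ (n:ℝ) ^ (μ/2 + 3/4) :=
      Real.rpow_le_rpow hm0.le hmnR (by linarith only [hμ0])
    calc (m:ℝ) ^ (μ + 1/2) * ((n:ℝ))⁻¹
        = (m:ℝ) ^ (μ/2 - 1/4) * ((m:ℝ) ^ (μ/2 + 3/4) * ((n:ℝ))⁻¹) := by
          rw [hsplitm]; ring
      _ ≤ (m:ℝ) ^ (μ/2 - 1/4) * ((n:ℝ) ^ (μ/2 + 3/4) * ((n:ℝ))⁻¹) :=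
          mul_le_mul_of_nonneg_left
            (mul_le_mul_of_nonneg_right hmono (inv_nonneg.2 hn0.le))
            (Real.rpow_nonneg hm0.le _)
      _ = (m:ℝ) ^ (μ/2 - 1/4) * (n:ℝ) ^ (μ/2 - 1/4) := by
          rw [hsplitn, hinv]
  have hfin2 : (64 * em * am / an) * (384 * K * em * am / an ^ 3)
      ≤ (256 * K ^ ((1:ℝ)/2) * (m:ℝ) ^ (-(1/8 - μ/4)) * (n:ℝ) ^ (-(1/8 - μ/4))) ^ 2 := by
    have hrhs : (256 * K ^ ((1:ℝ)/2) * (m:ℝ) ^ (-(1/8 - μ/4)) * (n:ℝ) ^ (-(1/8 - μ/4))) ^ 2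
        = 65536 * K * (((m:ℝ) ^ (-(1/8 - μ/4))) ^ 2 * ((n:ℝ) ^ (-(1/8 - μ/4))) ^ 2) := by
      rw [mul_pow, mul_pow, mul_pow, hKsq]; ring
    have hlhs : (64 * em * am / an) * (384 * K * em * am / an ^ 3)
        = 24576 * K * (em ^ 2 * am ^ 2 / an ^ 4) := by
      field_simp; ring
    rw [hlhs, hrhs]
    have hcz : (0:ℝ) ≤ em ^ 2 * am ^ 2 / an ^ 4 := by positivity
    have hB0 : (0:ℝ) ≤ ((m:ℝ) ^ (-(1/8 - μ/4))) ^ 2 * ((n:ℝ) ^ (-(1/8 - μ/4))) ^ 2 := by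
      positivity
    calc 24576 * K * (em ^ 2 * am ^ 2 / an ^ 4)
        ≤ 24576 * K * (((m:ℝ) ^ (-(1/8 - μ/4))) ^ 2 * ((n:ℝ) ^ (-(1/8 - μ/4))) ^ 2) :=
          mul_le_mul_of_nonneg_left hcore (by positivity)
      _ ≤ 65536 * K * (((m:ℝ) ^ (-(1/8 - μ/4))) ^ 2 * ((n:ℝ) ^ (-(1/8 - μ/4))) ^ 2) := by
          apply mul_le_mul_of_nonneg_right _ hB0
          linarith only [hK0]
  have ht0 : (0:ℝ) ≤ 256 * K ^ ((1:ℝ)/2) * (m:ℝ) ^ (-(1/8 - μ/4)) * (n:ℝ) ^ (-(1/8 - μ/4)) := by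
    positivity
  have hsq : ‖∫ x in (0:ℝ)..T, osc μ k m n x‖ ^ 2
      ≤ (256 * K ^ ((1:ℝ)/2) * (m:ℝ) ^ (-(1/8 - μ/4)) * (n:ℝ) ^ (-(1/8 - μ/4))) ^ 2 := by
    have h1 : ‖∫ x in (0:ℝ)..T, osc μ k m n x‖ ^ 2
        = ‖∫ x in (0:ℝ)..T, osc μ k m n x‖ * ‖∫ x in (0:ℝ)..T, osc μ k m n x‖ := sq _
    rw [h1]
    exact le_trans hprod hfin2
  calc ‖∫ x in (0:ℝ)..T, osc μ k m n x‖
      = Real.sqrt (‖∫ x in (0:ℝ)..T, osc μ k m n x‖ ^ 2) :=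
        (Real.sqrt_sq (norm_nonneg _)).symm
    _ ≤ Real.sqrt ((256 * K ^ ((1:ℝ)/2) * (m:ℝ) ^ (-(1/8 - μ/4)) * (n:ℝ) ^ (-(1/8 - μ/4))) ^ 2) :=
        Real.sqrt_le_sqrt hsq
    _ = 256 * K ^ ((1:ℝ)/2) * (m:ℝ) ^ (-(1/8 - μ/4)) * (n:ℝ) ^ (-(1/8 - μ/4)) :=
        Real.sqrt_sq ht0
end

section
/- For every integer n ≥ 1 there is a constant c(n) > 0 such that for all real K > 0 and all κ with 0 < κ < 1/4, the set D' = {ω ∈ [0,2π]^n : |⟨k,ω⟩ + j| ≥ κ(1+|j|) for every integer j ∈ ℤ and every k ∈ ℤ^n \ {0} with |k| ≤ K} satisfies Meas([0,2π]^n \ D') ≤ c(n) · K^{n+1} · κ, where Meas denotes n-dimensional Lebesgue measure. -/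
open Real MeasureTheory intervalIntegral

private lemma slab_volume (a c ε : ℝ) (ha : a ≠ 0) :
    volume {y : ℝ | |a * y + c| < ε} ≤ ENNReal.ofReal (2 * ε / |a|) := by
  rcases ha.lt_or_gt with h | h
  · have hsub : {y : ℝ | |a * y + c| < ε} ⊆ Set.Ioo ((ε - c) / a) ((-ε - c) / a) := by
      intro y hy
      rw [Set.mem_setOf_eq, abs_lt] at hy
      constructor
      · rw [div_lt_iff_of_neg h]; linarith [hy.2]
      · rw [lt_div_iff_of_neg h]; linarith [hy.1]
    calc volume {y : ℝ | |a * y + c| < ε} ≤ volume (Set.Ioo ((ε - c) / a) ((-ε - c) / a)) :=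
          measure_mono hsub
      _ = ENNReal.ofReal ((-ε - c) / a - (ε - c) / a) := Real.volume_Ioo
      _ = ENNReal.ofReal (2 * ε / |a|) := by
          rw [abs_of_neg h, div_sub_div_same]
          congr 1
          rw [show -ε - c - (ε - c) = -(2 * ε) by ring, neg_div, div_neg]
  · have hsub : {y : ℝ | |a * y + c| < ε} ⊆ Set.Ioo ((-ε - c) / a) ((ε - c) / a) := by
      intro y hy
      rw [Set.mem_setOf_eq, abs_lt] at hy
      constructor
      · rw [div_lt_iff₀ h]; linarith [hy.1]
      · rw [lt_div_iff₀ h]; linarith [hy.2]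
    calc volume {y : ℝ | |a * y + c| < ε} ≤ volume (Set.Ioo ((-ε - c) / a) ((ε - c) / a)) :=
          measure_mono hsub
      _ = ENNReal.ofReal ((ε - c) / a - (-ε - c) / a) := Real.volume_Ioo
      _ = ENNReal.ofReal (2 * ε / |a|) := by
          rw [abs_of_pos h, div_sub_div_same]
          congr 1
          rw [show ε - c - (-ε - c) = 2 * ε by ring]

private lemma box_slab (m : ℕ) (k : Fin (m + 1) → ℝ) (i₀ : Fin (m + 1)) (hk : k i₀ ≠ 0) (b ε : ℝ) :
    volume {ω : Fin (m + 1) → ℝ | (∀ i, ω i ∈ Set.Icc (0 : ℝ) (2 * π)) ∧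
        |(∑ i, k i * ω i) + b| < ε}
      ≤ ENNReal.ofReal ((2 * π) ^ m) * ENNReal.ofReal (2 * ε / |k i₀|) := by
  set S : Set (Fin (m + 1) → ℝ) := {ω | (∀ i, ω i ∈ Set.Icc (0 : ℝ) (2 * π)) ∧
      |(∑ i, k i * ω i) + b| < ε} with hS
  have hmS : MeasurableSet S := by
    have h1 : MeasurableSet {ω : Fin (m + 1) → ℝ | ∀ i, ω i ∈ Set.Icc (0 : ℝ) (2 * π)} := by
      have : {ω : Fin (m + 1) → ℝ | ∀ i, ω i ∈ Set.Icc (0 : ℝ) (2 * π)} =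
          Set.pi Set.univ fun _ => Set.Icc (0 : ℝ) (2 * π) := by
        ext ω; simp only [Set.mem_setOf_eq, Set.mem_univ_pi]
      rw [this]
      exact MeasurableSet.univ_pi fun i => measurableSet_Icc
    have h2 : MeasurableSet {ω : Fin (m + 1) → ℝ | |(∑ i, k i * ω i) + b| < ε} := by
      have hf : Measurable fun ω : Fin (m + 1) → ℝ => |(∑ i, k i * ω i) + b| := by
        apply Measurable.abs
        apply Measurable.add_const
        exact Finset.measurable_sum _ fun i _ => by fun_prop
      exact hf measurableSet_Iio
    exact h1.inter h2
  have e := MeasurableEquiv.piFinSuccAbove (fun _ : Fin (m + 1) => ℝ) i₀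
  have hmp := volume_preserving_piFinSuccAbove (fun _ : Fin (m + 1) => ℝ) i₀
  set T : Set (ℝ × (Fin m → ℝ)) :=
      (MeasurableEquiv.piFinSuccAbove (fun _ : Fin (m + 1) => ℝ) i₀).symm ⁻¹' S with hT
  have hmT : MeasurableSet T :=
    (MeasurableEquiv.piFinSuccAbove (fun _ : Fin (m + 1) => ℝ) i₀).symm.measurable hmS
  have hvol : volume S = (volume.prod volume) T := by
    have := (MeasurePreserving.symm _ hmp).measure_preimage (hmS.nullMeasurableSet)
    simpa [hT, ← Measure.volume_eq_prod] using this.symm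
  rw [hvol, Measure.prod_apply_symm hmT]
  have hslice : ∀ z : Fin m → ℝ,
      volume ((fun y => (y, z)) ⁻¹' T) ≤
        Set.indicator (Set.pi Set.univ fun _ : Fin m => Set.Icc (0 : ℝ) (2 * π))
          (fun _ => ENNReal.ofReal (2 * ε / |k i₀|)) z := by
    intro z
    have hpre : (fun y => (y, z)) ⁻¹' T =
        {y : ℝ | Fin.insertNth (α := fun _ => ℝ) i₀ y z ∈ S} := by
      ext y
      simp only [hT, Set.mem_preimage, Set.mem_setOf_eq,
        MeasurableEquiv.piFinSuccAbove_symm_apply]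
      rfl
    rw [hpre]
    by_cases hz : z ∈ Set.pi Set.univ fun _ : Fin m => Set.Icc (0 : ℝ) (2 * π)
    · rw [Set.indicator_of_mem hz]
      have hsub : {y : ℝ | Fin.insertNth (α := fun _ => ℝ) i₀ y z ∈ S} ⊆
          {y : ℝ | |k i₀ * y + ((∑ j, k (i₀.succAbove j) * z j) + b)| < ε} := by
        intro y hy
        rw [Set.mem_setOf_eq] at hy ⊢
        have hsum : (∑ i, k i * (Fin.insertNth (α := fun _ => ℝ) i₀ y z) i) =
            k i₀ * y + ∑ j, k (i₀.succAbove j) * z j := by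
          rw [Fin.sum_univ_succAbove (fun i => k i * (Fin.insertNth (α := fun _ => ℝ) i₀ y z) i) i₀]
          simp [Fin.insertNth_apply_same, Fin.insertNth_apply_succAbove]
        have := hy.2
        rw [hsum] at this
        convert this using 2
        ring
      calc volume {y : ℝ | Fin.insertNth (α := fun _ => ℝ) i₀ y z ∈ S} ≤ _ := measure_mono hsub
        _ ≤ _ := slab_volume _ _ _ hk
    · rw [Set.indicator_of_notMem hz]
      have : {y : ℝ | Fin.insertNth (α := fun _ => ℝ) i₀ y z ∈ S} = ∅ := by
        ext y
        simp only [Set.mem_setOf_eq, Set.mem_empty_iff_false, iff_false]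
        intro hy
        apply hz
        intro j _
        have := hy.1 (i₀.succAbove j)
        rwa [Fin.insertNth_apply_succAbove] at this
      simp [this]
  calc (∫⁻ z, volume ((fun y => (y, z)) ⁻¹' T)) ≤
        ∫⁻ z, Set.indicator (Set.pi Set.univ fun _ : Fin m => Set.Icc (0 : ℝ) (2 * π))
          (fun _ => ENNReal.ofReal (2 * ε / |k i₀|)) z := lintegral_mono hslice
    _ = ENNReal.ofReal (2 * ε / |k i₀|) *
          volume (Set.pi Set.univ fun _ : Fin m => Set.Icc (0 : ℝ) (2 * π)) := by
        rw [lintegral_indicator_const (MeasurableSet.univ_pi fun i => measurableSet_Icc)]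
    _ = ENNReal.ofReal ((2 * π) ^ m) * ENNReal.ofReal (2 * ε / |k i₀|) := by
        rw [volume_pi_pi]
        simp only [Real.volume_Icc, sub_zero]
        rw [Finset.prod_const, Finset.card_univ, Fintype.card_fin, ← ENNReal.ofReal_pow (by positivity)]
        ring

/-- measure estimate for the second Melnikov condition. -/
theorem melnikov_measure_estimate (n : ℕ) (hn : 1 ≤ n) :
    ∃ c : ℝ, 0 < c ∧ ∀ K : ℝ, 0 < K → ∀ κ : ℝ, 0 < κ → κ < 1 / 4 →
      volume ((Set.pi Set.univ fun _ : Fin n => Set.Icc (0 : ℝ) (2 * Real.pi)) \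
        {ω : Fin n → ℝ |
          ω ∈ (Set.pi Set.univ fun _ : Fin n => Set.Icc (0 : ℝ) (2 * Real.pi)) ∧
          ∀ (j : ℤ) (k : Fin n → ℤ), k ≠ 0 → (∑ i, (|k i| : ℝ)) ≤ K →
            κ * (1 + |(j : ℝ)|) ≤ |(∑ i, (k i : ℝ) * ω i) + (j : ℝ)|}) ≤
        ENNReal.ofReal (c * K ^ (n + 1) * κ) := by
  classical
  obtain ⟨m, rfl⟩ : ∃ m, n = m + 1 := ⟨n - 1, by omega⟩
  refine ⟨380 * ((m : ℝ) + 1) * 5 ^ (m + 1) * (2 * π) ^ m, by positivity, ?_⟩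
  intro K hK κ hκ hκ4
  set cube : Set (Fin (m + 1) → ℝ) :=
    Set.pi Set.univ fun _ : Fin (m + 1) => Set.Icc (0 : ℝ) (2 * Real.pi) with hcubedef
  -- a basic fact : any nonzero integer vector has ℓ¹ norm ≥ 1
  have hone : ∀ k : Fin (m + 1) → ℤ, k ≠ 0 → (1 : ℝ) ≤ ∑ i, (|k i| : ℝ) := by
    intro k hk
    obtain ⟨i, hi⟩ := Function.ne_iff.mp hk
    have h1 : (1 : ℝ) ≤ (|k i| : ℝ) := by
      have := Int.one_le_abs (by simpa using hi)
      exact_mod_cast this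
    calc (1 : ℝ) ≤ (|k i| : ℝ) := h1
      _ ≤ ∑ i, (|k i| : ℝ) :=
        Finset.single_le_sum (f := fun i => (|k i| : ℝ)) (fun i _ => by positivity)
          (Finset.mem_univ i)
  rcases lt_or_ge K 1 with hK1 | hK1
  · -- trivial case : no admissible k, the bad set is empty
    have hempty : (cube \ {ω : Fin (m + 1) → ℝ |
        ω ∈ cube ∧
        ∀ (j : ℤ) (k : Fin (m + 1) → ℤ), k ≠ 0 → (∑ i, (|k i| : ℝ)) ≤ K →
          κ * (1 + |(j : ℝ)|) ≤ |(∑ i, (k i : ℝ) * ω i) + (j : ℝ)|}) = ∅ := by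
      rw [Set.diff_eq_empty]
      intro ω hω
      refine ⟨hω, fun j k hk hKk => absurd hKk (not_le.mpr ?_)⟩
      exact lt_of_lt_of_le hK1 (hone k hk)
    rw [hempty]
    simp
  · -- main case
    set M : ℤ := ⌈K⌉ with hM
    set Sk : Finset (Fin (m + 1) → ℤ) :=
      (Fintype.piFinset fun _ : Fin (m + 1) => Finset.Icc (-M) M).filter
        (fun k => k ≠ 0 ∧ (∑ i, (|k i| : ℝ)) ≤ K) with hSk
    set SJ : (Fin (m + 1) → ℤ) → Finset ℤ :=
      fun k => Finset.Icc (-(9 * ∑ i, |k i|)) (9 * ∑ i, |k i|) with hSJ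
    set A : (Fin (m + 1) → ℤ) → ℤ → Set (Fin (m + 1) → ℝ) := fun k j =>
      {ω | (∀ i, ω i ∈ Set.Icc (0 : ℝ) (2 * π)) ∧
        |(∑ i, (k i : ℝ) * ω i) + (j : ℝ)| < κ * (1 + |(j : ℝ)|)} with hA
    -- covering
    have hcover : (cube \ {ω : Fin (m + 1) → ℝ |
        ω ∈ cube ∧
        ∀ (j : ℤ) (k : Fin (m + 1) → ℤ), k ≠ 0 → (∑ i, (|k i| : ℝ)) ≤ K →
          κ * (1 + |(j : ℝ)|) ≤ |(∑ i, (k i : ℝ) * ω i) + (j : ℝ)|})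
        ⊆ ⋃ k ∈ Sk, ⋃ j ∈ SJ k, A k j := by
      rintro ω ⟨hcube, hbad⟩
      have hωi : ∀ i, ω i ∈ Set.Icc (0 : ℝ) (2 * π) := fun i => hcube i (Set.mem_univ i)
      have : ¬ ∀ (j : ℤ) (k : Fin (m + 1) → ℤ), k ≠ 0 → (∑ i, (|k i| : ℝ)) ≤ K →
          κ * (1 + |(j : ℝ)|) ≤ |(∑ i, (k i : ℝ) * ω i) + (j : ℝ)| :=
        fun h => hbad ⟨hcube, h⟩
      push_neg at this
      obtain ⟨j, k, hk0, hkK, hlt⟩ := this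
      have hmR : (1 : ℝ) ≤ ∑ i, (|k i| : ℝ) := hone k hk0
      have hcast : ((∑ i, |k i| : ℤ) : ℝ) = ∑ i, (|k i| : ℝ) := by push_cast; rfl
      -- k ∈ Sk
      have hkSk : k ∈ Sk := by
        rw [hSk, Finset.mem_filter]
        refine ⟨Fintype.mem_piFinset.mpr fun i => ?_, hk0, hkK⟩
        rw [Finset.mem_Icc, ← abs_le]
        have h1 : (|k i| : ℝ) ≤ K := by
          calc (|k i| : ℝ) ≤ ∑ i', (|k i'| : ℝ) :=
              Finset.single_le_sum (f := fun i' => (|k i'| : ℝ)) (fun i' _ => by positivity)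
                (Finset.mem_univ i)
            _ ≤ K := hkK
        have h2 : (K : ℝ) ≤ (M : ℝ) := Int.le_ceil K
        exact_mod_cast h1.trans h2
      -- j ∈ SJ k
      have hjSJ : j ∈ SJ k := by
        have hs : |∑ i, (k i : ℝ) * ω i| ≤ 2 * π * ∑ i, (|k i| : ℝ) := by
          calc |∑ i, (k i : ℝ) * ω i| ≤ ∑ i, |(k i : ℝ) * ω i| :=
              Finset.abs_sum_le_sum_abs _ _
            _ ≤ ∑ i, (|k i| : ℝ) * (2 * π) := by
              refine Finset.sum_le_sum fun i _ => ?_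
              rw [abs_mul]
              push_cast
              refine mul_le_mul_of_nonneg_left ?_ (abs_nonneg _)
              rw [abs_of_nonneg (hωi i).1]
              exact (hωi i).2
            _ = 2 * π * ∑ i, (|k i| : ℝ) := by rw [← Finset.sum_mul]; ring
        have hjr : |(j : ℝ)| ≤ 9 * ∑ i, (|k i| : ℝ) := by
          have h1 : |(j : ℝ)| ≤ |(∑ i, (k i : ℝ) * ω i) + (j : ℝ)| + |∑ i, (k i : ℝ) * ω i| := by
            have h0 := abs_add_le ((∑ i, (k i : ℝ) * ω i) + (j : ℝ)) (-(∑ i, (k i : ℝ) * ω i))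
            rw [abs_neg] at h0
            have h1 : ((∑ i, (k i : ℝ) * ω i) + (j : ℝ)) + (-(∑ i, (k i : ℝ) * ω i)) = (j : ℝ) := by
              ring
            rwa [h1] at h0
          have hpi : π < 3.15 := pi_lt_d2
          have hpi2 : 2 * π * (∑ i, (|k i| : ℝ)) ≤ 2 * 3.15 * (∑ i, (|k i| : ℝ)) := by
            nlinarith [hmR]
          have hja : κ * |(j : ℝ)| ≤ (1 / 4) * |(j : ℝ)| :=
            mul_le_mul_of_nonneg_right hκ4.le (abs_nonneg _)
          nlinarith [h1, hlt, hs, hmR, abs_nonneg ((j : ℝ)), hκ.le]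
        rw [hSJ, Finset.mem_Icc, ← abs_le]
        exact_mod_cast hjr
      refine Set.mem_iUnion₂.mpr ⟨k, hkSk, Set.mem_iUnion₂.mpr ⟨j, hjSJ, ?_⟩⟩
      exact ⟨hωi, hlt⟩
    -- term bound
    set t : ℝ := (2 * π) ^ m * (20 * ((m : ℝ) + 1) * κ) with ht
    have ht0 : 0 ≤ t := by rw [ht]; positivity
    clear_value t
    have hterm : ∀ k ∈ Sk, ∀ j ∈ SJ k, volume (A k j) ≤ ENNReal.ofReal t := by
      intro k hkSk j hjSJ
      rw [hSk, Finset.mem_filter] at hkSk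
      obtain ⟨-, hk0, hkK⟩ := hkSk
      have hmR : (1 : ℝ) ≤ ∑ i, (|k i| : ℝ) := hone k hk0
      -- maximal coordinate
      obtain ⟨i₀, -, hi₀⟩ := Finset.exists_max_image Finset.univ (fun i => |k i|)
        Finset.univ_nonempty
      have hki₀ : k i₀ ≠ 0 := by
        intro h
        apply hk0
        funext i
        have h2 := hi₀ i (Finset.mem_univ i)
        rw [h, abs_zero] at h2
        exact abs_nonpos_iff.mp h2
      have hsummax : (∑ i, (|k i| : ℝ)) ≤ ((m : ℝ) + 1) * |(k i₀ : ℝ)| := by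
        have : ∀ i ∈ Finset.univ, (|k i| : ℝ) ≤ |(k i₀ : ℝ)| := by
          intro i _
          rw [← Int.cast_abs, ← Int.cast_abs]
          exact_mod_cast hi₀ i (Finset.mem_univ i)
        calc (∑ i, (|k i| : ℝ)) ≤ ∑ _i : Fin (m + 1), |(k i₀ : ℝ)| :=
            Finset.sum_le_sum this
          _ = ((m : ℝ) + 1) * |(k i₀ : ℝ)| := by
            rw [Finset.sum_const, Finset.card_univ, Fintype.card_fin, nsmul_eq_mul]
            push_cast; ring
      have hjle : |(j : ℝ)| ≤ 9 * ∑ i, (|k i| : ℝ) := by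
        rw [hSJ, Finset.mem_Icc, ← abs_le] at hjSJ
        have : ((|j| : ℤ) : ℝ) ≤ ((9 * ∑ i, |k i| : ℤ) : ℝ) := by exact_mod_cast hjSJ
        rw [Int.cast_abs] at this
        calc |(j : ℝ)| ≤ ((9 * ∑ i, |k i| : ℤ) : ℝ) := this
          _ = 9 * ∑ i, (|k i| : ℝ) := by push_cast; rfl
      have hka : (0 : ℝ) < |(k i₀ : ℝ)| := by
        rw [abs_pos]
        exact_mod_cast hki₀
      have hdiv : 2 * (κ * (1 + |(j : ℝ)|)) / |(k i₀ : ℝ)| ≤ 20 * ((m : ℝ) + 1) * κ := by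
        rw [div_le_iff₀ hka]
        nlinarith [hjle, hsummax, hmR, hκ.le, hka]
      calc volume (A k j) ≤ ENNReal.ofReal ((2 * π) ^ m) *
            ENNReal.ofReal (2 * (κ * (1 + |(j : ℝ)|)) / |(k i₀ : ℝ)|) :=
          box_slab m (fun i => (k i : ℝ)) i₀
            (by simpa using (Int.cast_ne_zero (α := ℝ)).mpr hki₀) (j : ℝ)
            (κ * (1 + |(j : ℝ)|))
        _ ≤ ENNReal.ofReal ((2 * π) ^ m) * ENNReal.ofReal (20 * ((m : ℝ) + 1) * κ) :=
          mul_le_mul_right (ENNReal.ofReal_le_ofReal hdiv) _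
        _ = ENNReal.ofReal t := by
          rw [ht, ← ENNReal.ofReal_mul (by positivity)]
    -- cardinalities
    have hcardJ : ∀ k ∈ Sk, ((SJ k).card : ℝ) ≤ 19 * K := by
      intro k hkSk
      rw [hSk, Finset.mem_filter] at hkSk
      obtain ⟨-, hk0, hkK⟩ := hkSk
      have hmR : (1 : ℝ) ≤ ∑ i, (|k i| : ℝ) := hone k hk0
      have hsum0 : (0 : ℤ) ≤ ∑ i, |k i| := Finset.sum_nonneg fun i _ => abs_nonneg _
      rw [hSJ, Int.card_Icc]
      have : (9 * ∑ i, |k i|) + 1 - -(9 * ∑ i, |k i|) = 18 * (∑ i, |k i|) + 1 := by ring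
      rw [this]
      calc (((18 * ∑ i, |k i| + 1).toNat : ℕ) : ℝ)
          = ((18 * (∑ i, |k i|) + 1 : ℤ) : ℝ) := by
            rw [← Int.cast_natCast, Int.toNat_of_nonneg (by omega)]
        _ = 18 * (∑ i, (|k i| : ℝ)) + 1 := by push_cast; ring
        _ ≤ 19 * K := by linarith [hkK, hK1]
    -- cardinality of Sk
    have hM1 : (1 : ℤ) ≤ M := by
      rw [hM]
      calc (1 : ℤ) = ⌈(1 : ℝ)⌉ := by simp
        _ ≤ ⌈K⌉ := Int.ceil_le_ceil hK1
    have h5K : (((2 * M + 1).toNat : ℕ) : ℝ) ≤ 5 * K := by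
      have hMK : (M : ℝ) ≤ K + 1 := by
        rw [hM]
        linarith [Int.ceil_lt_add_one K]
      calc (((2 * M + 1).toNat : ℕ) : ℝ) = ((2 * M + 1 : ℤ) : ℝ) := by
            rw [← Int.cast_natCast, Int.toNat_of_nonneg (by omega)]
        _ = 2 * (M : ℝ) + 1 := by push_cast; ring
        _ ≤ 5 * K := by linarith [hMK, hK1]
    have hcardSk : (Sk.card : ℝ) ≤ (5 * K) ^ (m + 1) := by
      have h1 : Sk.card ≤ (Fintype.piFinset fun _ : Fin (m + 1) => Finset.Icc (-M) M).card :=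
        Finset.card_le_card (Finset.filter_subset _ _)
      have h2 : (Fintype.piFinset fun _ : Fin (m + 1) => Finset.Icc (-M) M).card
          = ((2 * M + 1).toNat) ^ (m + 1) := by
        rw [Fintype.card_piFinset]
        rw [Finset.prod_const, Finset.card_univ, Fintype.card_fin]
        congr 1
        rw [Int.card_Icc]
        congr 1
        ring
      have h3 : Sk.card ≤ ((2 * M + 1).toNat) ^ (m + 1) := h1.trans_eq h2
      calc (Sk.card : ℝ) ≤ ((((2 * M + 1).toNat) ^ (m + 1) : ℕ) : ℝ) := by exact_mod_cast h3
        _ = (((2 * M + 1).toNat : ℕ) : ℝ) ^ (m + 1) := by push_cast; ring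
        _ ≤ (5 * K) ^ (m + 1) := pow_le_pow_left₀ (by positivity) h5K _
    -- put everything together
    refine le_trans (measure_mono hcover) ?_
    refine le_trans (measure_biUnion_finset_le Sk _) ?_
    have hk_each : ∀ k ∈ Sk, volume (⋃ j ∈ SJ k, A k j) ≤ ENNReal.ofReal (19 * K * t) := by
      intro k hk
      refine le_trans (measure_biUnion_finset_le (SJ k) _) ?_
      calc ∑ j ∈ SJ k, volume (A k j) ≤ ∑ j ∈ SJ k, ENNReal.ofReal t :=
          Finset.sum_le_sum (fun j hj => hterm k hk j hj)
        _ = ((SJ k).card : ENNReal) * ENNReal.ofReal t := by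
            rw [Finset.sum_const, nsmul_eq_mul]
        _ = ENNReal.ofReal (((SJ k).card : ℝ) * t) := by
            rw [ENNReal.ofReal_mul (by positivity), ENNReal.ofReal_natCast]
        _ ≤ ENNReal.ofReal (19 * K * t) := ENNReal.ofReal_le_ofReal
            (mul_le_mul_of_nonneg_right (hcardJ k hk) ht0)
    refine le_trans (Finset.sum_le_sum hk_each) ?_
    calc ∑ k ∈ Sk, ENNReal.ofReal (19 * K * t)
        = (Sk.card : ENNReal) * ENNReal.ofReal (19 * K * t) := by
          rw [Finset.sum_const, nsmul_eq_mul]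
      _ = ENNReal.ofReal ((Sk.card : ℝ) * (19 * K * t)) := by
          rw [← ENNReal.ofReal_natCast Sk.card, ← ENNReal.ofReal_mul (Nat.cast_nonneg _)]
      _ ≤ ENNReal.ofReal ((5 * K) ^ (m + 1) * (19 * K * t)) := ENNReal.ofReal_le_ofReal
          (mul_le_mul_of_nonneg_right hcardSk (by positivity))
      _ = ENNReal.ofReal (380 * ((m : ℝ) + 1) * 5 ^ (m + 1) * (2 * π) ^ m * K ^ (m + 1 + 1) * κ) := by
          congr 1
          rw [ht, mul_pow]
          ring
end
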